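/- arXiv:1404.0787 — 13 statements merged into one kernel-verified Lean document; each statement's English description precedes it below -/
import Mathlib

section
/- If X is a reflexive Banach space, f: X → (-∞,∞] is weakly sequentially lower semicontinuous and level bounded (all sublevel sets bounded), φ: X → [0,∞) is weakly sequentially lower semicontinuous, and the infimal convolution (f⊕φ)(x) := inf{f(w)+φ(w−x) : w ∈ X} is finite everywhere, then f⊕φ is weakly sequentially lower semicontinuous on X. -/
open Filter Topology Set Bornology

variable {X : Type*} [NormedAddCommGroup X] [NormedSpace ℝ X]

/-- Infimal convolution of an extended-real-valued `f` with a real-valued `φ`. -/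
noncomputable def infConv (f : X → EReal) (φ : X → ℝ) (x : X) : EReal :=
  ⨅ w, f w + ((φ (w - x) : ℝ) : EReal)

/-- ε-Fréchet subdifferential of a real-valued function. -/
def frechetSubdiff (g : X → ℝ) (ε : ℝ) (x0 : X) : Set (X →L[ℝ] ℝ) :=
  {p | ∀ η : ℝ, 0 < η → ∀ᶠ x in 𝓝 x0, p (x - x0) ≤ g x - g x0 + (ε + η) * ‖x - x0‖}

/-- ε-Fréchet subdifferential of an extended-real-valued function. -/
def frechetSubdiffE (f : X → EReal) (ε : ℝ) (x0 : X) : Set (X →L[ℝ] ℝ) :=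
  {p | ∀ η : ℝ, 0 < η → ∀ᶠ x in 𝓝 x0,
    ((p (x - x0) : ℝ) : EReal) ≤ f x - f x0 + (((ε + η) * ‖x - x0‖ : ℝ) : EReal)}

/-- Limiting (Mordukhovich) subdifferential of a real-valued function. -/
def limitingSubdiff (g : X → ℝ) (x0 : X) : Set (X →L[ℝ] ℝ) :=
  {p | ∃ (x : ℕ → X) (ε : ℕ → ℝ) (q : ℕ → X →L[ℝ] ℝ),
    (∀ k, 0 ≤ ε k) ∧ Tendsto ε atTop (𝓝 0) ∧
    Tendsto x atTop (𝓝 x0) ∧ Tendsto (fun k => g (x k)) atTop (𝓝 (g x0)) ∧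
    (∀ k, q k ∈ frechetSubdiff g (ε k) (x k)) ∧
    (∀ v : X, Tendsto (fun k => (q k) v) atTop (𝓝 (p v)))}

/-- Limiting (Mordukhovich) subdifferential of an extended-real-valued function. -/
def limitingSubdiffE (f : X → EReal) (x0 : X) : Set (X →L[ℝ] ℝ) :=
  {p | ∃ (x : ℕ → X) (ε : ℕ → ℝ) (q : ℕ → X →L[ℝ] ℝ),
    (∀ k, 0 ≤ ε k) ∧ Tendsto ε atTop (𝓝 0) ∧
    Tendsto x atTop (𝓝 x0) ∧ Tendsto (fun k => f (x k)) atTop (𝓝 (f x0)) ∧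
    (∀ k, q k ∈ frechetSubdiffE f (ε k) (x k)) ∧
    (∀ v : X, Tendsto (fun k => (q k) v) atTop (𝓝 (p v)))}

/-- Fréchet strict differentiability of an extended-real-valued function. -/
def FrechetStrictDiffAtE (f : X → EReal) (x0 : X) : Prop :=
  ∃ v : X →L[ℝ] ℝ, ∀ ε : ℝ, 0 < ε → ∃ δ > (0 : ℝ), ∀ x y : X,
    ‖x - x0‖ < δ → ‖y - x0‖ < δ →
      f x - f y - ((v (x - y) : ℝ) : EReal) ≤ ((ε * ‖x - y‖ : ℝ) : EReal) ∧
      ((-(ε * ‖x - y‖) : ℝ) : EReal) ≤ f x - f y - ((v (x - y) : ℝ) : EReal)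

/-- Local Lipschitz continuity of an extended-real-valued function around a point. -/
def LocallyLipschitzAtE (f : X → EReal) (x0 : X) : Prop :=
  ∃ ℓ : ℝ, 0 ≤ ℓ ∧ ∃ δ > (0 : ℝ), ∀ x y : X, ‖x - x0‖ < δ → ‖y - x0‖ < δ →
    f x - f y ≤ ((ℓ * ‖x - y‖ : ℝ) : EReal)

section Aux
open NormedSpace TopologicalSpace

lemma aux_vanish (S : Submodule ℝ X) (g : X →L[ℝ] ℝ) (u : ℝ)
    (h : ∀ a ∈ S, g a < u) : ∀ a ∈ S, g a = 0 := by
  intro a ha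
  by_contra hga
  have h1 : ∀ t : ℝ, t * g a < u := fun t => by simpa using h (t • a) (S.smul_mem t ha)
  have := h1 ((|u| + 1) / g a)
  rw [div_mul_cancel₀ _ hga] at this
  nlinarith [abs_nonneg u, le_abs_self u]

lemma aux_sep (S : Submodule ℝ X) (hS : IsClosed (S : Set X)) {z : X} (hz : z ∉ S) :
    ∃ g : X →L[ℝ] ℝ, (∀ a ∈ S, g a = 0) ∧ 0 < g z := by
  obtain ⟨g, u, hgu, hu⟩ := geometric_hahn_banach_closed_point S.convex hS hz
  refine ⟨g, aux_vanish S g u hgu, ?_⟩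
  have h0 : (0:ℝ) < u := by simpa using hgu 0 S.zero_mem
  linarith

/-- If the dual of a normed space is separable, so is the space. -/
lemma aux_sep_of_dual_sep [SeparableSpace (StrongDual ℝ X)] : SeparableSpace X := by
  obtain ⟨g, hg⟩ := TopologicalSpace.exists_dense_seq (StrongDual ℝ X)
  have hx : ∀ n, ∃ x : X, ‖x‖ ≤ 1 ∧ ‖g n‖ / 2 ≤ g n x := by
    intro n
    rcases eq_or_lt_of_le (norm_nonneg (g n)) with h0 | h0
    · exact ⟨0, by simp, by simp [← h0]⟩
    · obtain ⟨x, hx1, hx2⟩ := (g n).exists_lt_apply_of_lt_opNorm (by linarith : ‖g n‖ / 2 < ‖g n‖)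
      rcases le_or_gt 0 (g n x) with h | h
      · exact ⟨x, hx1.le, by rw [Real.norm_eq_abs, abs_of_nonneg h] at hx2; linarith⟩
      · refine ⟨-x, by simpa using hx1.le, ?_⟩
        rw [map_neg, Real.norm_eq_abs, abs_of_neg h] at *
        linarith
  choose x hx1 hx2 using hx
  have hdense : closure (↑(Submodule.span ℝ (Set.range x)) : Set X) = univ := by
    by_contra hd
    obtain ⟨z, hz⟩ : ∃ z, z ∉ closure (↑(Submodule.span ℝ (Set.range x)) : Set X) := by
      by_contra h; push_neg at h; exact hd (eq_univ_of_forall h)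
    have hz' : z ∉ (Submodule.span ℝ (Set.range x)).topologicalClosure := by
      rw [← SetLike.mem_coe, Submodule.topologicalClosure_coe]; exact hz
    obtain ⟨f, hf0, hfz⟩ := aux_sep _ (Submodule.isClosed_topologicalClosure _) hz'
    have hfne : (0:ℝ) < ‖f‖ := by
      by_contra h
      push_neg at h
      have h1 := f.le_opNorm z
      have h2 : ‖f‖ = 0 := le_antisymm h (norm_nonneg f)
      rw [h2, zero_mul] at h1
      have := le_abs_self (f z)
      rw [Real.norm_eq_abs] at h1
      linarith
    obtain ⟨n, hn⟩ : ∃ n, dist (g n) f < ‖f‖ / 4 := by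
      obtain ⟨n, hn⟩ := hg.exists_dist_lt f (by linarith : (0:ℝ) < ‖f‖/4)
      exact ⟨n, by rwa [dist_comm] at hn⟩
    rw [dist_eq_norm] at hn
    have hfx : f (x n) = 0 :=
      hf0 _ (Submodule.le_topologicalClosure _ (Submodule.subset_span ⟨n, rfl⟩))
    have h1 : g n (x n) ≤ ‖f‖ / 4 := by
      have h2 : g n (x n) - f (x n) ≤ ‖(g n - f) (x n)‖ := by
        rw [ContinuousLinearMap.sub_apply]; exact le_abs_self _
      have h3 : ‖(g n - f) (x n)‖ ≤ ‖g n - f‖ * ‖x n‖ := (g n - f).le_opNorm _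
      nlinarith [hx1 n, norm_nonneg (g n - f), hfx]
    have h3 : 3 * ‖f‖ / 4 ≤ ‖g n‖ := by
      have h5 := abs_norm_sub_norm_le (g n) f
      nlinarith [neg_abs_le (‖g n‖ - ‖f‖)]
    have := hx2 n
    linarith
  have hsep : IsSeparable (univ : Set X) := by
    have h3 := ((Set.countable_range x).isSeparable.span (R := ℝ)).closure
    rwa [hdense] at h3
  exact isSeparable_univ_iff.mp hsep

/-- A closed subspace of a reflexive space is reflexive. -/
lemma aux_subspace_reflexive
    (hrefl : Function.Surjective (inclusionInDoubleDual ℝ X))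
    (Y : Submodule ℝ X) (hY : IsClosed (Y : Set X)) :
    Function.Surjective (inclusionInDoubleDual ℝ ↥Y) := by
  intro F
  let r : StrongDual ℝ X → StrongDual ℝ ↥Y := fun p => p.comp Y.subtypeL
  have hrnorm : ∀ p : StrongDual ℝ X, ‖r p‖ ≤ ‖p‖ := by
    intro p
    refine ContinuousLinearMap.opNorm_le_bound _ (norm_nonneg p) (fun z => ?_)
    have : ‖p (Y.subtypeL z)‖ ≤ ‖p‖ * ‖(z : X)‖ := p.le_opNorm _
    simpa [r] using this
  let Flin : StrongDual ℝ X →ₗ[ℝ] ℝ :=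
    { toFun := fun p => F (r p)
      map_add' := by
        intro p q
        have : r (p + q) = r p + r q := by ext z; simp [r]
        show F (r (p+q)) = F (r p) + F (r q)
        rw [this, map_add]
      map_smul' := by
        intro c p
        have : r (c • p) = c • r p := by ext z; simp [r]
        show F (r (c • p)) = c • F (r p)
        rw [this, map_smul] }
  let Ftilde : StrongDual ℝ X →L[ℝ] ℝ := LinearMap.mkContinuous Flin ‖F‖ (by
    intro p
    have h1 : ‖F (r p)‖ ≤ ‖F‖ * ‖r p‖ := F.le_opNorm _
    have h2 := hrnorm p
    calc ‖Flin p‖ = ‖F (r p)‖ := rfl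
      _ ≤ ‖F‖ * ‖r p‖ := h1
      _ ≤ ‖F‖ * ‖p‖ := by nlinarith [norm_nonneg F])
  obtain ⟨x, hx⟩ := hrefl Ftilde
  have hxF : ∀ p : StrongDual ℝ X, p x = F (r p) := by
    intro p
    exact (by simpa [inclusionInDoubleDual] using congrArg (fun G => G p) hx : p x = Ftilde p)
  have hxY : x ∈ Y := by
    by_contra hxn
    obtain ⟨g, hg0, hgx⟩ := aux_sep Y hY hxn
    have h1 : r g = 0 := by ext z; exact hg0 _ z.2
    have := hxF g
    rw [h1, map_zero] at this
    rw [this] at hgx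
    exact lt_irrefl _ hgx
  refine ⟨⟨x, hxY⟩, ?_⟩
  ext t
  obtain ⟨g, hg1, _⟩ := exists_extension_norm_eq Y t
  have hrg : r g = t := by ext z; exact hg1 z
  have h2 : g x = F t := by rw [hxF g, hrg]
  calc (inclusionInDoubleDual ℝ ↥Y) ⟨x, hxY⟩ t = t ⟨x, hxY⟩ := rfl
    _ = g x := (hg1 ⟨x, hxY⟩).symm
    _ = F t := h2

set_option maxHeartbeats 1000000 in
/-- In a reflexive space, every bounded sequence has a weakly convergent subsequence. -/
lemma aux_weak_compact (hrefl : Function.Surjective (inclusionInDoubleDual ℝ X))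
    (w : ℕ → X) (M : ℝ) (hM : ∀ k, ‖w k‖ ≤ M) :
    ∃ (s : ℕ → ℕ) (wbar : X), StrictMono s ∧
      ∀ p : X →L[ℝ] ℝ, Tendsto (fun j => p (w (s j))) atTop (𝓝 (p wbar)) := by
  have hM0 : 0 ≤ M := le_trans (norm_nonneg _) (hM 0)
  set S := Submodule.span ℝ (Set.range w) with hS
  set Yc := S.topologicalClosure with hYcdef
  have hYclosed : IsClosed (Yc : Set X) := Submodule.isClosed_topologicalClosure S
  have hwY : ∀ k, w k ∈ Yc := fun k =>
    Submodule.le_topologicalClosure S (Submodule.subset_span ⟨k, rfl⟩)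
  haveI hsepY : SeparableSpace ↥Yc := by
    have h3 := ((Set.countable_range w).isSeparable.span (R := ℝ)).closure
    rw [← Submodule.topologicalClosure_coe] at h3
    exact h3.separableSpace
  have hYrefl := aux_subspace_reflexive hrefl Yc hYclosed
  haveI : SeparableSpace (StrongDual ℝ (StrongDual ℝ ↥Yc)) :=
    hYrefl.denseRange.separableSpace
      (inclusionInDoubleDual ℝ ↥Yc).continuous
  haveI : SeparableSpace (StrongDual ℝ ↥Yc) := aux_sep_of_dual_sep (X := StrongDual ℝ ↥Yc)
  obtain ⟨T, hT⟩ := TopologicalSpace.exists_dense_seq (StrongDual ℝ ↥Yc)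
  have hqex : ∀ n, ∃ q : StrongDual ℝ X, ∀ z : ↥Yc, q z = T n z := by
    intro n
    obtain ⟨g, hg1, _⟩ := exists_extension_norm_eq Yc (T n)
    exact ⟨g, hg1⟩
  choose q hq using hqex
  set v : ℕ → (ℕ → ℝ) := fun k n => q n (w k) with hv
  have hvmem : ∀ k, v k ∈ Set.pi Set.univ (fun n => Set.Icc (-(‖q n‖ * M)) (‖q n‖ * M)) := by
    intro k n _
    have h1 : ‖q n (w k)‖ ≤ ‖q n‖ * ‖w k‖ := (q n).le_opNorm _
    have h2 : ‖q n‖ * ‖w k‖ ≤ ‖q n‖ * M := by nlinarith [norm_nonneg (q n), hM k]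
    rw [Real.norm_eq_abs] at h1
    exact ⟨by linarith [neg_abs_le (q n (w k))], by linarith [le_abs_self (q n (w k))]⟩
  have hcomp : IsCompact (Set.pi Set.univ fun n => Set.Icc (-(‖q n‖ * M)) (‖q n‖ * M)) :=
    isCompact_univ_pi fun n => isCompact_Icc
  obtain ⟨g0, -, s, hs, hconv⟩ := hcomp.isSeqCompact hvmem
  have hcoord : ∀ n, Tendsto (fun j => q n (w (s j))) atTop (𝓝 (g0 n)) := by
    intro n
    exact (tendsto_pi_nhds.mp hconv) n
  -- every functional converges along the subsequence
  have hcau : ∀ p : StrongDual ℝ X, ∃ l, Tendsto (fun j => p (w (s j))) atTop (𝓝 l) := by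
    intro p
    have hc : CauchySeq (fun j => p (w (s j))) := by
      rw [Metric.cauchySeq_iff]
      intro ε hε
      set pY : StrongDual ℝ ↥Yc := p.comp Yc.subtypeL with hpY
      obtain ⟨n, hn⟩ := hT.exists_dist_lt pY (show (0:ℝ) < ε/(4*(M+1)) by positivity)
      have hnd : ‖pY - T n‖ < ε/(4*(M+1)) := by
        exact lt_of_eq_of_lt (dist_eq_norm pY (T n)).symm hn
      have happ : ∀ k, |p (w k) - q n (w k)| ≤ ε/4 := by
        intro k
        set z : ↥Yc := ⟨w k, hwY k⟩ with hz
        have e1 : p (w k) = pY z := rfl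
        have e2 : q n (w k) = T n z := hq n z
        have e3 : |pY z - T n z| ≤ ‖pY - T n‖ * ‖z‖ := by
          have := (pY - T n).le_opNorm z
          rwa [ContinuousLinearMap.sub_apply, Real.norm_eq_abs] at this
        have e4 : ‖z‖ ≤ M := by
          show ‖(z : X)‖ ≤ M
          exact hM k
        rw [e1, e2]
        have e5 : ‖pY - T n‖ * ‖z‖ ≤ (ε/(4*(M+1))) * M := by
          nlinarith [norm_nonneg (pY - T n), norm_nonneg z]
        have e6 : (ε/(4*(M+1))) * M ≤ ε/4 := by
          rw [div_mul_eq_mul_div, div_le_div_iff₀ (by positivity) (by norm_num)]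
          nlinarith
        linarith
      have hcq : CauchySeq (fun j => q n (w (s j))) := (hcoord n).cauchySeq
      rw [Metric.cauchySeq_iff] at hcq
      obtain ⟨N, hN⟩ := hcq (ε/4) (by positivity)
      refine ⟨N, fun j hj j' hj' => ?_⟩
      have h1 := happ (s j)
      have h2 := happ (s j')
      have h3 := hN j hj j' hj'
      rw [Real.dist_eq] at h3 ⊢
      have : |p (w (s j)) - p (w (s j'))| ≤
          |p (w (s j)) - q n (w (s j))| + |q n (w (s j)) - q n (w (s j'))|
            + |q n (w (s j')) - p (w (s j'))| := by
        have := abs_sub_abs_le_abs_sub (p (w (s j))) (p (w (s j')))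
        calc |p (w (s j)) - p (w (s j'))|
            = |(p (w (s j)) - q n (w (s j))) + (q n (w (s j)) - q n (w (s j')))
              + (q n (w (s j')) - p (w (s j')))| := by ring_nf
          _ ≤ _ := by
              refine (abs_add_le _ _).trans ?_
              gcongr
              exact abs_add_le _ _
      have h4 : |q n (w (s j')) - p (w (s j'))| ≤ ε/4 := by
        rw [abs_sub_comm]; exact h2
      linarith
    exact cauchySeq_tendsto_of_complete hc
  choose lam hlam using hcau
  let Llin : StrongDual ℝ X →ₗ[ℝ] ℝ :=
    { toFun := lam
      map_add' := by
        intro p p'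
        refine tendsto_nhds_unique (hlam (p + p')) ?_
        have := (hlam p).add (hlam p')
        refine this.congr (fun j => ?_)
        simp
      map_smul' := by
        intro c p
        refine tendsto_nhds_unique (hlam (c • p)) ?_
        have := (hlam p).const_mul c
        refine this.congr (fun j => ?_)
        simp }
  let L : StrongDual ℝ X →L[ℝ] ℝ := LinearMap.mkContinuous Llin M (by
    intro p
    have h1 : Tendsto (fun j => ‖p (w (s j))‖) atTop (𝓝 ‖lam p‖) := (hlam p).norm
    have h2 : ∀ j, ‖p (w (s j))‖ ≤ M * ‖p‖ := by
      intro j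
      calc ‖p (w (s j))‖ ≤ ‖p‖ * ‖w (s j)‖ := p.le_opNorm _
        _ ≤ M * ‖p‖ := by nlinarith [norm_nonneg p, hM (s j)]
    exact le_of_tendsto h1 (Eventually.of_forall h2))
  obtain ⟨wbar, hwbar⟩ := hrefl L
  refine ⟨s, wbar, hs, fun p => ?_⟩
  have hpw : p wbar = lam p := by
    exact (by simpa [inclusionInDoubleDual] using congrArg (fun G => G p) hwbar : p wbar = L p)
  rw [hpw]
  exact hlam p

end Aux

/-- weak sequential lower semicontinuity of the infimal convolution. -/
theorem stmt_0 [CompleteSpace X]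
    (hrefl : Function.Surjective (NormedSpace.inclusionInDoubleDual ℝ X))
    (f : X → EReal) (φ : X → ℝ)
    (hfprop : ∃ x, f x ≠ ⊤) (hfbot : ∀ x, f x ≠ ⊥)
    (hφpos : ∀ x, 0 ≤ φ x)
    (hfin : ∀ x, infConv f φ x ≠ ⊥ ∧ infConv f φ x ≠ ⊤)
    (hfwlsc : ∀ (x : ℕ → X) (x0 : X),
      (∀ p : X →L[ℝ] ℝ, Tendsto (fun k => p (x k)) atTop (𝓝 (p x0))) →
      f x0 ≤ liminf (fun k => f (x k)) atTop)
    (hφwlsc : ∀ (x : ℕ → X) (x0 : X),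
      (∀ p : X →L[ℝ] ℝ, Tendsto (fun k => p (x k)) atTop (𝓝 (p x0))) →
      ((φ x0 : ℝ) : EReal) ≤ liminf (fun k => ((φ (x k) : ℝ) : EReal)) atTop)
    (hlev : ∀ α : ℝ, IsBounded {x : X | f x ≤ ((α : ℝ) : EReal)}) :
    ∀ (x : ℕ → X) (x0 : X),
      (∀ p : X →L[ℝ] ℝ, Tendsto (fun k => p (x k)) atTop (𝓝 (p x0))) →
      infConv f φ x0 ≤ liminf (fun k => infConv f φ (x k)) atTop := by
  
  intro x x0 hw
  by_contra hcon
  rw [not_le] at hcon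
  obtain ⟨c, hc1, hc2⟩ := EReal.exists_between_coe_real hcon
  have hfreq : ∃ᶠ k in atTop, infConv f φ (x k) < (c : EReal) :=
    frequently_lt_of_liminf_lt (h := hc1)
  obtain ⟨s, hs, hsk⟩ := Filter.extraction_of_frequently_atTop hfreq
  have hwex : ∀ j, ∃ u : X, f u + ((φ (u - x (s j)) : ℝ) : EReal) < (c : EReal) := by
    intro j
    have h := hsk j
    rw [infConv] at h
    exact iInf_lt_iff.mp h
  choose ws hws using hwex
  have hfws : ∀ j, f (ws j) < (c : EReal) := by
    intro j
    have h1 : f (ws j) ≤ f (ws j) + ((φ (ws j - x (s j)) : ℝ) : EReal) :=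
      le_add_of_nonneg_right (by exact_mod_cast hφpos _)
    exact lt_of_le_of_lt h1 (hws j)
  obtain ⟨M, hMb⟩ := isBounded_iff_forall_norm_le.mp (hlev c)
  have hMn : ∀ j, ‖ws j‖ ≤ M := fun j => hMb _ (le_of_lt (hfws j))
  obtain ⟨t, wbar, ht, htw⟩ := aux_weak_compact hrefl ws M hMn
  have hst : Tendsto (s ∘ t) atTop atTop := (hs.comp ht).tendsto_atTop
  have hdiff : ∀ p : X →L[ℝ] ℝ,
      Tendsto (fun j => p (ws (t j) - x (s (t j)))) atTop (𝓝 (p (wbar - x0))) := by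
    intro p
    have h1 : Tendsto (fun j => p (x (s (t j)))) atTop (𝓝 (p x0)) := (hw p).comp hst
    have h2 := (htw p).sub h1
    simpa [map_sub] using h2
  have hA : f wbar ≤ liminf (fun j => f (ws (t j))) atTop :=
    hfwlsc (fun j => ws (t j)) wbar (fun p => htw p)
  have hB : ((φ (wbar - x0) : ℝ) : EReal) ≤
      liminf (fun j => ((φ (ws (t j) - x (s (t j))) : ℝ) : EReal)) atTop :=
    hφwlsc _ _ hdiff
  have hsum : infConv f φ x0 ≤ (c : EReal) := by
    have h0 : infConv f φ x0 ≤ f wbar + ((φ (wbar - x0) : ℝ) : EReal) :=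
      iInf_le (fun w => f w + ((φ (w - x0) : ℝ) : EReal)) wbar
    have h1 := add_le_add hA hB
    have h2 := EReal.le_liminf_add (f := atTop) (u := fun j => f (ws (t j)))
      (v := fun j => ((φ (ws (t j) - x (s (t j))) : ℝ) : EReal))
    have h3 : liminf ((fun j => f (ws (t j))) +
        (fun j => ((φ (ws (t j) - x (s (t j))) : ℝ) : EReal))) atTop ≤ (c : EReal) := by
      refine liminf_le_of_frequently_le ?_
      exact (Eventually.of_forall (fun j => (hws (t j)).le)).frequently
    exact h0.trans (h1.trans (h2.trans h3))
  exact absurd hsum (not_le.mpr hc2)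
end

section
/- Suppose f: X → (-∞,∞] is bounded below, φ: X → [0,∞) is Lipschitz continuous and bounded above on every bounded subset of X, and f is level bounded. Then f⊕φ is Lipschitz continuous on every bounded subset of X. -/
open Filter Topology Set Bornology

variable {X : Type*} [NormedAddCommGroup X] [NormedSpace ℝ X]

/-- Lipschitz continuity on bounded sets of the infimal convolution. -/
theorem stmt_3 [CompleteSpace X] (f : X → EReal) (φ : X → ℝ) (g : X → ℝ)
    (hfbot : ∀ x, f x ≠ ⊥) (hfprop : ∃ x, f x ≠ ⊤) (hφpos : ∀ x, 0 ≤ φ x)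
    (hfbdd : ∃ c : ℝ, ∀ x, ((c : ℝ) : EReal) ≤ f x)
    (hφLip : ∀ K : Set X, IsBounded K → ∃ L : ℝ, 0 ≤ L ∧
      ∀ x ∈ K, ∀ y ∈ K, |φ x - φ y| ≤ L * ‖x - y‖)
    (hφbdd : ∀ K : Set X, IsBounded K → ∃ M : ℝ, ∀ x ∈ K, φ x ≤ M)
    (hlev : ∀ α : ℝ, IsBounded {x : X | f x ≤ ((α : ℝ) : EReal)})
    (hg : ∀ x, (g x : EReal) = infConv f φ x) :
    ∀ K : Set X, IsBounded K → ∃ L : ℝ, 0 ≤ L ∧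
      ∀ x ∈ K, ∀ y ∈ K, |g x - g y| ≤ L * ‖x - y‖ := by
  intro K hK
  obtain ⟨x0, hx0⟩ := hfprop
  set r0 := (f x0).toReal with hr0
  have hfx0 : f x0 = ((r0 : ℝ) : EReal) := (EReal.coe_toReal hx0 (hfbot x0)).symm
  obtain ⟨R2, hR2⟩ := isBounded_iff_forall_norm_le.mp hK
  obtain ⟨M, hM⟩ := hφbdd (Metric.closedBall 0 (‖x0‖ + R2)) Metric.isBounded_closedBall
  set α := r0 + M with hαdef
  -- upper bound for g on K
  have hα : ∀ x ∈ K, g x ≤ α := by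
    intro x hx
    have h1 : (g x : EReal) ≤ f x0 + ((φ (x0 - x) : ℝ) : EReal) := by
      rw [hg x]; simp only [infConv]; exact iInf_le _ x0
    have hmem : x0 - x ∈ Metric.closedBall (0 : X) (‖x0‖ + R2) := by
      rw [mem_closedBall_zero_iff]
      calc ‖x0 - x‖ ≤ ‖x0‖ + ‖x‖ := norm_sub_le _ _
        _ ≤ ‖x0‖ + R2 := by linarith [hR2 x hx]
    have hφM : φ (x0 - x) ≤ M := hM _ hmem
    rw [hfx0] at h1
    have h2 : g x ≤ r0 + φ (x0 - x) := by exact_mod_cast h1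
    linarith
  -- level set bound
  obtain ⟨R1, hR1⟩ := isBounded_iff_forall_norm_le.mp (hlev (α + 1))
  -- Lipschitz constant of φ on the relevant bounded set
  obtain ⟨L, hL0, hL⟩ := hφLip (Metric.closedBall 0 (R1 + R2)) Metric.isBounded_closedBall
  refine ⟨L, hL0, ?_⟩
  have key : ∀ x ∈ K, ∀ y ∈ K, g x - g y ≤ L * ‖x - y‖ := by
    intro x hx y hy
    have main : ∀ ε : ℝ, 0 < ε → g x - g y ≤ L * ‖x - y‖ + ε := by
      intro ε hε
      set δ := min ε 1 with hδdef
      have hδ0 : 0 < δ := lt_min hε one_pos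
      have hδ1 : δ ≤ 1 := min_le_right _ _
      have hδε : δ ≤ ε := min_le_left _ _
      have h1 : (⨅ w, f w + ((φ (w - y) : ℝ) : EReal)) < ((g y + δ : ℝ) : EReal) := by
        have : (g y : EReal) < ((g y + δ : ℝ) : EReal) := by
          exact_mod_cast lt_add_of_pos_right (g y) hδ0
        rw [hg y] at this; simpa only [infConv] using this
      obtain ⟨w, hw⟩ := iInf_lt_iff.mp h1
      have hfw_le : f w ≤ f w + ((φ (w - y) : ℝ) : EReal) := by
        nth_rewrite 1 [← add_zero (f w)]
        exact add_le_add (le_refl _) (by exact_mod_cast hφpos (w - y))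
      have hfw_lt : f w < ((g y + δ : ℝ) : EReal) := lt_of_le_of_lt hfw_le hw
      have hfw_ne_top : f w ≠ ⊤ := hfw_lt.ne_top
      set a := (f w).toReal with hadef
      have hfa : f w = ((a : ℝ) : EReal) := (EReal.coe_toReal hfw_ne_top (hfbot w)).symm
      have hw' : a + φ (w - y) < g y + δ := by
        rw [hfa] at hw
        exact_mod_cast hw
      have hwS : ‖w‖ ≤ R1 := by
        apply hR1
        have : a ≤ α + 1 := by
          have := hα y hy
          have h0 := hφpos (w - y)
          linarith
        show f w ≤ (((α + 1 : ℝ)) : EReal)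
        rw [hfa]; exact_mod_cast this
      have hmx : w - x ∈ Metric.closedBall (0 : X) (R1 + R2) := by
        rw [mem_closedBall_zero_iff]
        calc ‖w - x‖ ≤ ‖w‖ + ‖x‖ := norm_sub_le _ _
          _ ≤ R1 + R2 := by linarith [hR2 x hx]
      have hmy : w - y ∈ Metric.closedBall (0 : X) (R1 + R2) := by
        rw [mem_closedBall_zero_iff]
        calc ‖w - y‖ ≤ ‖w‖ + ‖y‖ := norm_sub_le _ _
          _ ≤ R1 + R2 := by linarith [hR2 y hy]
      have hLip : |φ (w - x) - φ (w - y)| ≤ L * ‖x - y‖ := by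
        have h := hL _ hmx _ hmy
        have heq : (w - x) - (w - y) = y - x := by abel
        rw [heq, norm_sub_rev] at h
        exact h
      have hgx : g x ≤ a + φ (w - x) := by
        have h1 : (g x : EReal) ≤ f w + ((φ (w - x) : ℝ) : EReal) := by
          rw [hg x]; simp only [infConv]; exact iInf_le _ w
        rw [hfa] at h1
        exact_mod_cast h1
      have habs := abs_le.mp hLip
      have : g x ≤ g y + δ + L * ‖x - y‖ := by linarith [habs.1, habs.2]
      linarith
    by_contra hcon
    push_neg at hcon
    have := main ((g x - g y - L * ‖x - y‖) / 2) (by linarith)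
    linarith
  intro x hx y hy
  rw [abs_sub_le_iff]
  constructor
  · exact key x hx y hy
  · rw [norm_sub_rev]
    exact key y hy x hx
end

section
/- Let x̄ ∈ S₀ := {x : (f⊕φ)(x) = f(x)}. If f is calm at x̄ relative to dom f with constant ℓ (|f(x)−f(x̄)| ≤ ℓ‖x−x̄‖ for all x ∈ dom f), φ is coercive with constant m > ℓ (m‖x‖ ≤ φ(x) for all x), and φ(0)=0, then f⊕φ is well-posed at x̄: the projection set P(x̄) = {w : f(w)+φ(w−x̄) = (f⊕φ)(x̄)} equals {x̄}, and every minimizing sequence w_k (i.e. f(w_k)+φ(w_k−x̄) → (f⊕φ)(x̄)) converges in norm to x̄. -/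
open Filter Topology Set Bornology

variable {X : Type*} [NormedAddCommGroup X] [NormedSpace ℝ X]

/-- well-posedness of the infimal convolution at points of `S₀`. -/
theorem stmt_4 [CompleteSpace X] (f : X → EReal) (φ : X → ℝ) (g : X → ℝ)
    (hfbot : ∀ x, f x ≠ ⊥) (hφpos : ∀ x, 0 ≤ φ x) (hφ0 : φ 0 = 0)
    (hg : ∀ x, (g x : EReal) = infConv f φ x)
    (x0 : X) (hx0 : (g x0 : EReal) = f x0)
    (ℓ m : ℝ) (hℓ : 0 ≤ ℓ) (hlm : ℓ < m)
    (hcalm : ∀ x : X, f x ≠ ⊤ → |(f x).toReal - (f x0).toReal| ≤ ℓ * ‖x - x0‖)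
    (hcoer : ∀ x : X, m * ‖x‖ ≤ φ x) :
    {w : X | f w + ((φ (w - x0) : ℝ) : EReal) = (g x0 : EReal)} = {x0} ∧
    ∀ w : ℕ → X,
      Tendsto (fun k => f (w k) + ((φ (w k - x0) : ℝ) : EReal)) atTop (𝓝 ((g x0 : ℝ) : EReal)) →
      Tendsto w atTop (𝓝 x0) := by
  have hc : f x0 = ((g x0 : ℝ) : EReal) := hx0.symm
  have hfx0 : (f x0).toReal = g x0 := by rw [hc]; simp
  have key : ∀ w : X, ((g x0 + (m - ℓ) * ‖w - x0‖ : ℝ) : EReal)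
      ≤ f w + ((φ (w - x0) : ℝ) : EReal) := by
    intro w
    by_cases hw : f w = ⊤
    · rw [hw]
      simp [EReal.top_add_coe]
    · have h1 := hcalm w hw
      rw [hfx0] at h1
      have h1' := abs_le.mp h1
      have h2 := hcoer (w - x0)
      have hwr : f w = ((f w).toReal : EReal) := (EReal.coe_toReal hw (hfbot w)).symm
      rw [hwr, ← EReal.coe_add, EReal.coe_le_coe_iff]
      nlinarith [h1'.1, h1'.2]
  constructor
  · apply Set.eq_singleton_iff_unique_mem.mpr
    constructor
    · show f x0 + ((φ (x0 - x0) : ℝ) : EReal) = _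
      rw [sub_self, hφ0, hc]
      norm_num
    · intro w hw
      have hle := key w
      rw [Set.mem_setOf_eq.mp hw, EReal.coe_le_coe_iff] at hle
      have hr0 : (0:ℝ) ≤ ‖w - x0‖ := norm_nonneg _
      have : ‖w - x0‖ = 0 := by nlinarith
      rw [norm_sub_eq_zero_iff] at this
      exact this
  · intro w hw
    rw [Metric.tendsto_atTop]
    intro ε hε
    have hlt : ((g x0 : ℝ) : EReal) < ((g x0 + (m - ℓ) * ε : ℝ) : EReal) := by
      rw [EReal.coe_lt_coe_iff]
      nlinarith
    have hev := hw.eventually_lt_const hlt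
    rw [Filter.eventually_atTop] at hev
    obtain ⟨N, hN⟩ := hev
    refine ⟨N, fun n hn => ?_⟩
    have h1 := lt_of_le_of_lt (key (w n)) (hN n hn)
    rw [EReal.coe_lt_coe_iff] at h1
    have hr0 : (0:ℝ) ≤ ‖w n - x0‖ := norm_nonneg _
    rw [dist_eq_norm]
    nlinarith
end

section
/- Suppose φ(0)=0, φ is coercive on X with constant m>0 (m‖x‖ ≤ φ(x) for all x), and f is Lipschitz continuous on dom f with constant ℓ where 0 ≤ ℓ < m. Then S₀ := {x : (f⊕φ)(x) = f(x)} equals {x ∈ X : P(x) = {x}}, where P(x) := {w : f(w)+φ(w−x) = (f⊕φ)(x)}. -/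
open Filter Topology Set Bornology

variable {X : Type*} [NormedAddCommGroup X] [NormedSpace ℝ X]

/-- `S₀` coincides with the set of points whose projection set is `{x}`. -/
theorem stmt_5 [CompleteSpace X] (f : X → EReal) (φ : X → ℝ) (g : X → ℝ)
    (hfbot : ∀ x, f x ≠ ⊥) (hφpos : ∀ x, 0 ≤ φ x) (hφ0 : φ 0 = 0)
    (hg : ∀ x, (g x : EReal) = infConv f φ x)
    (ℓ m : ℝ) (hℓ : 0 ≤ ℓ) (hm : 0 < m) (hlm : ℓ < m)
    (hcoer : ∀ x : X, m * ‖x‖ ≤ φ x)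
    (hLip : ∀ x y : X, f x ≠ ⊤ → f y ≠ ⊤ → |(f x).toReal - (f y).toReal| ≤ ℓ * ‖x - y‖) :
    {x : X | (g x : EReal) = f x} =
      {x : X | {w : X | f w + ((φ (w - x) : ℝ) : EReal) = (g x : EReal)} = {x}} := by
  ext x
  simp only [Set.mem_setOf_eq]
  constructor
  · intro hx
    have hfx_top : f x ≠ ⊤ := by rw [← hx]; exact EReal.coe_ne_top _
    ext w
    simp only [Set.mem_setOf_eq, Set.mem_singleton_iff]
    constructor
    · intro hw
      by_cases hwtop : f w = ⊤
      · exfalso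
        rw [hwtop, EReal.top_add_coe] at hw
        exact (EReal.coe_ne_top _) hw.symm
      have hfw : ((f w).toReal : EReal) = f w := EReal.coe_toReal hwtop (hfbot w)
      have hfxr : ((f x).toReal : EReal) = f x := EReal.coe_toReal hfx_top (hfbot x)
      have heq : (f w).toReal + φ (w - x) = g x := by
        rw [← hfw, ← EReal.coe_add] at hw
        exact_mod_cast hw
      have hgx : g x = (f x).toReal := by
        rw [← hfxr] at hx
        exact_mod_cast hx
      have h1 : m * ‖w - x‖ ≤ φ (w - x) := hcoer _
      have habs : (f x).toReal - (f w).toReal ≤ ℓ * ‖x - w‖ :=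
        (abs_le.mp (hLip x w hfx_top hwtop)).2
      rw [norm_sub_rev x w] at habs
      have hn : ‖w - x‖ = 0 := le_antisymm (by nlinarith) (norm_nonneg _)
      have := norm_eq_zero.mp hn
      exact sub_eq_zero.mp this
    · rintro rfl
      rw [sub_self, hφ0]
      simpa using hx.symm
  · intro hset
    have hx : x ∈ {w : X | f w + ((φ (w - x) : ℝ) : EReal) = (g x : EReal)} := by
      rw [hset]; exact rfl
    simp only [Set.mem_setOf_eq, sub_self, hφ0] at hx
    simpa using hx.symm
end

section
/- Suppose φ(0)=0, φ is coercive on X with constant m>0, and f is Lipschitz continuous on dom f with constant ℓ, 0 ≤ ℓ < m. Then dom f ⊂ S₀ := {x : (f⊕φ)(x) = f(x)}. -/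
open Filter Topology Set Bornology

variable {X : Type*} [NormedAddCommGroup X] [NormedSpace ℝ X]

/-- `dom f ⊂ S₀`. -/
theorem stmt_6 [CompleteSpace X] (f : X → EReal) (φ : X → ℝ) (g : X → ℝ)
    (hfbot : ∀ x, f x ≠ ⊥) (hφpos : ∀ x, 0 ≤ φ x) (hφ0 : φ 0 = 0)
    (hg : ∀ x, (g x : EReal) = infConv f φ x)
    (ℓ m : ℝ) (hℓ : 0 ≤ ℓ) (hm : 0 < m) (hlm : ℓ < m)
    (hcoer : ∀ x : X, m * ‖x‖ ≤ φ x)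
    (hLip : ∀ x y : X, f x ≠ ⊤ → f y ≠ ⊤ → |(f x).toReal - (f y).toReal| ≤ ℓ * ‖x - y‖) :
    {x : X | f x ≠ ⊤} ⊆ {x : X | (g x : EReal) = f x} := by
  intro x hx
  simp only [Set.mem_setOf_eq] at hx ⊢
  rw [hg]
  apply le_antisymm
  · have h := iInf_le (fun w => f w + ((φ (w - x) : ℝ) : EReal)) x
    simpa [infConv, sub_self, hφ0] using h
  · apply le_iInf
    intro w
    by_cases hw : f w = ⊤
    · simp [hw]
    · have hx' := EReal.coe_toReal hx (hfbot x)
      have hw' := EReal.coe_toReal hw (hfbot w)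
      have hL := hLip x w hx hw
      have hkey : (f x).toReal ≤ (f w).toReal + φ (w - x) := by
        have h1 : (f x).toReal - (f w).toReal ≤ ℓ * ‖x - w‖ :=
          (abs_le.mp hL).2
        have h2 : ℓ * ‖x - w‖ ≤ m * ‖w - x‖ := by
          rw [show ‖x - w‖ = ‖w - x‖ from norm_sub_rev x w]
          exact mul_le_mul_of_nonneg_right hlm.le (norm_nonneg _)
        have h3 := hcoer (w - x)
        linarith
      calc f x = (((f x).toReal : ℝ) : EReal) := hx'.symm
        _ ≤ ((((f w).toReal + φ (w - x) : ℝ)) : EReal) := by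
            exact_mod_cast hkey
        _ = f w + ((φ (w - x) : ℝ) : EReal) := by
            rw [EReal.coe_add, hw']
end

section
/- Let ε ≥ 0, let x̄ ∈ X and suppose P(x̄) := {w : f(w)+φ(w−x̄) = (f⊕φ)(x̄)} is nonempty. Then the ε-Fréchet subdifferential satisfies ∂̂_ε(f⊕φ)(x̄) ⊂ ⋂_{w ∈ P(x̄)} ( ∂̂_ε f(w) ∩ [−∂̂_ε φ(w−x̄)] ). -/
open Filter Topology Set Bornology

variable {X : Type*} [NormedAddCommGroup X] [NormedSpace ℝ X]

/-- upper estimate of the ε-Fréchet subdifferential via projections. -/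
theorem stmt_7 [CompleteSpace X] (f : X → EReal) (φ : X → ℝ) (g : X → ℝ)
    (hfbot : ∀ x, f x ≠ ⊥) (hφpos : ∀ x, 0 ≤ φ x)
    (hg : ∀ x, (g x : EReal) = infConv f φ x)
    (ε : ℝ) (hε : 0 ≤ ε) (x0 : X)
    (hPne : ∃ w : X, f w + ((φ (w - x0) : ℝ) : EReal) = (g x0 : EReal)) :
    ∀ p ∈ frechetSubdiff g ε x0, ∀ w : X,
      f w + ((φ (w - x0) : ℝ) : EReal) = (g x0 : EReal) →
      p ∈ frechetSubdiffE f ε w ∧ -p ∈ frechetSubdiff φ ε (w - x0) := by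
  intro p hp w hw
  obtain ⟨r, hr⟩ : ∃ r : ℝ, f w = (r : EReal) := by
    cases hfw : f w with
    | bot => exact absurd hfw (hfbot w)
    | coe r => exact ⟨r, rfl⟩
    | top =>
      exfalso
      rw [hfw, EReal.top_add_coe] at hw
      exact (EReal.coe_ne_top _) hw.symm
  have hreal : r + φ (w - x0) = g x0 := by
    rw [hr] at hw
    exact_mod_cast hw
  have hle : ∀ x v : X, (g x : EReal) ≤ f v + ((φ (v - x) : ℝ) : EReal) := by
    intro x v
    rw [hg x]
    exact iInf_le _ v
  constructor
  · intro η hη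
    have hev := hp η hη
    have ht : Filter.Tendsto (fun x : X => x - w + x0) (𝓝 w) (𝓝 x0) := by
      have hc : Continuous fun x : X => x - w + x0 := by continuity
      have := hc.tendsto w
      simpa using this
    filter_upwards [ht.eventually hev] with x hx
    have e1 : x - w + x0 - x0 = x - w := by abel
    rw [e1] at hx
    have h1 : (g (x - w + x0) : EReal) ≤ f x + ((φ (w - x0) : ℝ) : EReal) := by
      have := hle (x - w + x0) x
      have e2 : x - (x - w + x0) = w - x0 := by abel
      rwa [e2] at this
    rw [hr]
    cases hfx : f x with
    | bot =>
      exact absurd hfx (hfbot x)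
    | top =>
      rw [show (⊤ : EReal) - (r : EReal) = ⊤ from rfl]
      rw [EReal.top_add_coe]
      exact le_top
    | coe s =>
      rw [hfx] at h1
      have h1' : g (x - w + x0) ≤ s + φ (w - x0) := by exact_mod_cast h1
      have : (p (x - w) : ℝ) ≤ s - r + (ε + η) * ‖x - w‖ := by linarith
      rw [← EReal.coe_sub, ← EReal.coe_add]
      exact_mod_cast this
  · intro η hη
    have hev := hp η hη
    have ht : Filter.Tendsto (fun u : X => w - u) (𝓝 (w - x0)) (𝓝 x0) := by
      have hc : Continuous fun u : X => w - u := by continuity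
      have := hc.tendsto (w - x0)
      simpa using this
    filter_upwards [ht.eventually hev] with u hu
    have h1 : (g (w - u) : EReal) ≤ f w + ((φ (w - (w - u)) : ℝ) : EReal) := hle (w - u) w
    rw [hr, show w - (w - u) = u from by abel] at h1
    have h1' : g (w - u) ≤ r + φ u := by exact_mod_cast h1
    have e1 : w - u - x0 = -(u - (w - x0)) := by abel
    rw [e1, map_neg, norm_neg] at hu
    simp only [ContinuousLinearMap.neg_apply]
    linarith
end

section
/- Suppose φ is subadditive and positively homogeneous. Let x̄ ∈ X and w̄ ∈ P(x̄) := {w : f(w)+φ(w−x̄) = (f⊕φ)(x̄)}. Then for every t ∈ (0,1], the point w̄ belongs to P(t w̄ + (1−t) x̄), and moreover (f⊕φ)(t w̄ + (1−t) x̄) = (1−t)(f⊕φ)(x̄) + t f(w̄). -/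
open Filter Topology Set Bornology

variable {X : Type*} [NormedAddCommGroup X] [NormedSpace ℝ X]

/-- projections along the segment for subadditive positively homogeneous `φ`. -/
theorem stmt_8 [CompleteSpace X] (f : X → EReal) (φ : X → ℝ) (g : X → ℝ)
    (hfbot : ∀ x, f x ≠ ⊥) (hφpos : ∀ x, 0 ≤ φ x)
    (hsub : ∀ x y : X, φ (x + y) ≤ φ x + φ y)
    (hpos : ∀ t : ℝ, 0 < t → ∀ x : X, φ (t • x) = t * φ x)
    (hg : ∀ x, (g x : EReal) = infConv f φ x)
    (x0 w0 : X) (hw0 : f w0 + ((φ (w0 - x0) : ℝ) : EReal) = (g x0 : EReal)) :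
    ∀ t : ℝ, 0 < t → t ≤ 1 →
      f w0 + ((φ (w0 - (t • w0 + (1 - t) • x0)) : ℝ) : EReal)
          = (g (t • w0 + (1 - t) • x0) : EReal) ∧
      g (t • w0 + (1 - t) • x0) = (1 - t) * g x0 + t * (f w0).toReal := by
  intro t ht ht1
  set xt := t • w0 + (1 - t) • x0 with hxt
  have hφ0 : φ 0 = 0 := by
    have h2 := hpos 2 two_pos 0
    simp only [smul_zero] at h2
    linarith
  have hsmul : ∀ s : ℝ, 0 ≤ s → ∀ x : X, φ (s • x) = s * φ x := by
    intro s hs x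
    rcases eq_or_lt_of_le hs with h | h
    · simp [← h, hφ0]
    · exact hpos s h x
  have hwxt : w0 - xt = (1 - t) • (w0 - x0) := by rw [hxt]; module
  have hxtx : xt - x0 = t • (w0 - x0) := by rw [hxt]; module
  have hφwxt : φ (w0 - xt) = (1 - t) * φ (w0 - x0) := by
    rw [hwxt, hsmul (1 - t) (by linarith)]
  have hφxtx : φ (xt - x0) = t * φ (w0 - x0) := by
    rw [hxtx, hpos t ht]
  -- f w0 is real
  have htop : f w0 ≠ ⊤ := by
    intro h
    rw [h, EReal.top_add_coe] at hw0
    exact EReal.coe_ne_top _ hw0.symm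
  obtain ⟨r, hr⟩ : ∃ r : ℝ, f w0 = (r : EReal) :=
    ⟨(f w0).toReal, (EReal.coe_toReal htop (hfbot w0)).symm⟩
  have hrreal : r + φ (w0 - x0) = g x0 := by
    rw [hr] at hw0
    exact_mod_cast hw0
  -- lower bound
  have hlow : ((g x0 - t * φ (w0 - x0) : ℝ) : EReal) ≤ (g xt : EReal) := by
    rw [hg xt]
    refine le_iInf fun w => ?_
    have h1 : (g x0 : EReal) ≤ f w + ((φ (w - x0) : ℝ) : EReal) := by
      rw [hg x0]; exact iInf_le _ w
    have h2' : φ (w - x0) ≤ φ (w - xt) + t * φ (w0 - x0) := by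
      have := hsub (w - xt) (xt - x0)
      rw [sub_add_sub_cancel, hφxtx] at this
      linarith
    have h4 : (g x0 : EReal) ≤ f w + ((φ (w - xt) : ℝ) : EReal) + ((t * φ (w0 - x0) : ℝ) : EReal) := by
      calc (g x0 : EReal) ≤ f w + ((φ (w - x0) : ℝ) : EReal) := h1
        _ ≤ f w + ((φ (w - xt) + t * φ (w0 - x0) : ℝ) : EReal) := by
            apply add_le_add_right
            exact_mod_cast h2'
        _ = f w + ((φ (w - xt) : ℝ) : EReal) + ((t * φ (w0 - x0) : ℝ) : EReal) := by
            rw [EReal.coe_add, add_assoc]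
    have := EReal.sub_le_of_le_add h4
    rw [← EReal.coe_sub] at this
    exact this
  -- upper bound
  have hup : (g xt : EReal) ≤ ((r + (1 - t) * φ (w0 - x0) : ℝ) : EReal) := by
    rw [hg xt]
    have := iInf_le (fun w => f w + ((φ (w - xt) : ℝ) : EReal)) w0
    rw [hr, hφwxt] at this
    exact this.trans_eq (by norm_cast)
  have hkey : g xt = r + (1 - t) * φ (w0 - x0) := by
    have h5 : g x0 - t * φ (w0 - x0) = r + (1 - t) * φ (w0 - x0) := by linarith
    rw [h5] at hlow
    exact_mod_cast le_antisymm hup hlow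
  constructor
  · rw [hr, hφwxt, hkey]; norm_cast
  · rw [hkey, hr]
    simp only [EReal.toReal_coe]
    rw [← hrreal]; ring
end

section
/- Suppose φ is subadditive and positively homogeneous, and x̄ ∈ X satisfies P(x̄) ≠ ∅. Then for every ε ≥ 0, ∂̂_ε(f⊕φ)(x̄) ⊂ ⋂_{w ∈ P(x̄)} ⋂_{t ∈ (0,1]} ( ∂̂_ε(f⊕φ)(tw+(1−t)x̄) ∩ [−∂̂_ε φ(w−x̄)] ). -/
open Filter Topology Set Bornology

variable {X : Type*} [NormedAddCommGroup X] [NormedSpace ℝ X]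

/-- ε-Fréchet subdifferential estimate along the segment. -/
theorem stmt_9 [CompleteSpace X] (f : X → EReal) (φ : X → ℝ) (g : X → ℝ)
    (hfbot : ∀ x, f x ≠ ⊥) (hφpos : ∀ x, 0 ≤ φ x)
    (hsub : ∀ x y : X, φ (x + y) ≤ φ x + φ y)
    (hpos : ∀ t : ℝ, 0 < t → ∀ x : X, φ (t • x) = t * φ x)
    (hg : ∀ x, (g x : EReal) = infConv f φ x)
    (ε : ℝ) (hε : 0 ≤ ε) (x0 : X)
    (hPne : ∃ w : X, f w + ((φ (w - x0) : ℝ) : EReal) = (g x0 : EReal)) :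
    ∀ p ∈ frechetSubdiff g ε x0, ∀ w : X,
      f w + ((φ (w - x0) : ℝ) : EReal) = (g x0 : EReal) →
      ∀ t : ℝ, 0 < t → t ≤ 1 →
        p ∈ frechetSubdiff g ε (t • w + (1 - t) • x0) ∧
        -p ∈ frechetSubdiff φ ε (w - x0) := by

  intro p hp w hw t ht0 ht1
  -- extract the real value of f w
  have hfw_ne_top : f w ≠ ⊤ := by
    intro h
    rw [h] at hw
    simp [EReal.top_add_coe] at hw
  obtain ⟨r, hr⟩ : ∃ r : ℝ, f w = (r : EReal) := by
    lift f w to ℝ using ⟨hfw_ne_top, hfbot w⟩ with r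
    exact ⟨r, rfl⟩
  rw [hr] at hw
  have hr0 : r + φ (w - x0) = g x0 := by exact_mod_cast hw
  -- φ 0 = 0
  have hφ0 : φ 0 = 0 := by
    have h2 := hpos 2 two_pos 0
    simp at h2
    linarith
  have hpos' : ∀ s : ℝ, 0 ≤ s → ∀ x : X, φ (s • x) = s * φ x := by
    intro s hs x
    rcases eq_or_lt_of_le hs with h | h
    · simp [← h, hφ0]
    · exact hpos s h x
  -- Lemma A : g x ≤ g y + φ (y - x)
  have lemA : ∀ x y : X, g x ≤ g y + φ (y - x) := by
    intro x y
    set c := φ (y - x) with hc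
    have key : ((g x - c : ℝ) : EReal) ≤ ⨅ v, f v + ((φ (v - y) : ℝ) : EReal) := by
      apply le_iInf
      intro v
      have h1 : (g x : EReal) ≤ f v + ((φ (v - x) : ℝ) : EReal) := by
        rw [hg x]; exact iInf_le _ v
      have h2 : φ (v - x) ≤ φ (v - y) + c := by
        have := hsub (v - y) (y - x)
        have e : v - y + (y - x) = v - x := by abel
        rw [e] at this
        exact this
      rcases eq_or_ne (f v) ⊤ with htop | htop
      · rw [htop]
        simp [EReal.top_add_coe]
      · obtain ⟨s, hs⟩ : ∃ s : ℝ, f v = (s : EReal) := by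
          lift f v to ℝ using ⟨htop, hfbot v⟩ with s
          exact ⟨s, rfl⟩
        rw [hs] at h1 ⊢
        have h1' : g x ≤ s + φ (v - x) := by exact_mod_cast h1
        have : g x - c ≤ s + φ (v - y) := by linarith
        exact_mod_cast this
    have h3 : (g x : EReal) ≤ (g y : EReal) + (c : EReal) := by
      calc (g x : EReal) = ((g x - c : ℝ) : EReal) + (c : EReal) := by
            norm_cast; ring
        _ ≤ (⨅ v, f v + ((φ (v - y) : ℝ) : EReal)) + (c : EReal) :=
            add_le_add key le_rfl
        _ = (g y : EReal) + (c : EReal) := by rw [hg y]; rfl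
    have h4 : (g x : EReal) ≤ ((g y + c : ℝ) : EReal) := by push_cast; exact h3
    exact_mod_cast h4
  -- Lemma B : g x ≤ r + φ (w - x)
  have lemB : ∀ x : X, g x ≤ r + φ (w - x) := by
    intro x
    have h1 : (g x : EReal) ≤ f w + ((φ (w - x) : ℝ) : EReal) := by
      rw [hg x]; exact iInf_le _ w
    rw [hr] at h1
    exact_mod_cast h1
  set xt := t • w + (1 - t) • x0 with hxt_def
  set c0 := φ (w - x0) with hc0
  have evec1 : w - xt = (1 - t) • (w - x0) := by
    rw [hxt_def]; module
  have evec2 : xt - x0 = t • (w - x0) := by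
    rw [hxt_def]; module
  have hwt : φ (w - xt) = (1 - t) * c0 := by
    rw [evec1, hpos' (1 - t) (by linarith)]
  have hxt0 : φ (xt - x0) = t * c0 := by
    rw [evec2, hpos' t (le_of_lt ht0)]
  have hgt : g xt = g x0 - t * c0 := by
    have h1 : g xt ≤ r + (1 - t) * c0 := by
      have := lemB xt; rw [hwt] at this; exact this
    have h2 : g x0 ≤ g xt + t * c0 := by
      have := lemA x0 xt; rw [hxt0] at this; exact this
    linarith
  constructor
  · -- p ∈ frechetSubdiff g ε xt
    intro η hη
    have H := hp η hη
    have hmap : Tendsto (fun x : X => x + (x0 - xt)) (𝓝 xt) (𝓝 x0) := by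
      have hc : Continuous (fun x : X => x + (x0 - xt)) :=
        continuous_id.add continuous_const
      have := hc.tendsto xt
      simpa using this
    filter_upwards [hmap.eventually H] with x hx
    have e1 : x + (x0 - xt) - x0 = x - xt := by abel
    rw [e1] at hx
    have h3 : g (x + (x0 - xt)) ≤ g x + t * c0 := by
      have := lemA (x + (x0 - xt)) x
      have e2 : x - (x + (x0 - xt)) = xt - x0 := by abel
      rw [e2, hxt0] at this
      exact this
    linarith
  · -- -p ∈ frechetSubdiff φ ε (w - x0)
    intro η hη
    have H := hp η hη
    have hmap : Tendsto (fun u : X => w - u) (𝓝 (w - x0)) (𝓝 x0) := by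
      have hc : Continuous (fun u : X => w - u) :=
        continuous_const.sub continuous_id
      have := hc.tendsto (w - x0)
      simpa using this
    filter_upwards [hmap.eventually H] with u hu
    have h3 : g (w - u) ≤ r + φ u := by
      have := lemB (w - u)
      have e : w - (w - u) = u := by abel
      rw [e] at this
      exact this
    have e1 : w - u - x0 = -(u - (w - x0)) := by abel
    rw [e1, map_neg, norm_neg] at hu
    have hnp : (-p) (u - (w - x0)) = -(p (u - (w - x0))) := rfl
    rw [hnp]
    linarith
end

section
/- Suppose φ: X → [0,∞) is lower semicontinuous. Let ε > 0, η > 0, x̄ ∈ X, and x* ∈ ∂̂_ε(f⊕φ)(x̄). Then there exist w̃ ∈ X with f(w̃)+φ(w̃−x̄) < (f⊕φ)(x̄)+η² and w̄ ∈ X such that ‖w̄−w̃‖ < η and x* ∈ −∂̂_{ε+η} φ(w̄−x̄). -/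
open Filter Topology Set Bornology

variable {X : Type*} [NormedAddCommGroup X] [NormedSpace ℝ X]

/-- Ekeland's variational principle (restricted form on a closed set). -/
lemma ekeland_aux {X : Type*} [NormedAddCommGroup X] [CompleteSpace X]
    (s : Set X) (hs : IsClosed s) (ψ : X → ℝ) (hlsc : LowerSemicontinuous ψ)
    (m : ℝ) (hbd : ∀ u ∈ s, m ≤ ψ u) (α : ℝ) (hα : 0 < α)
    (u0 : X) (hu0 : u0 ∈ s) :
    ∃ ub ∈ s, ψ ub + α * ‖ub - u0‖ ≤ ψ u0 ∧ ∀ u ∈ s, ψ ub ≤ ψ u + α * ‖u - ub‖ := by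
  set T : X → Set X := fun v => {u | u ∈ s ∧ ψ u + α * ‖u - v‖ ≤ ψ v} with hT
  have hTself : ∀ v ∈ s, v ∈ T v := fun v hv => ⟨hv, by simp⟩
  have hTbdd : ∀ v, BddBelow (ψ '' T v) := by
    rintro v
    exact ⟨m, by rintro y ⟨u, hu, rfl⟩; exact hbd u hu.1⟩
  have hex : ∀ (n : ℕ) (v : X), ∃ u,
      v ∈ s → u ∈ T v ∧ ψ u < sInf (ψ '' T v) + 1/(n+1) := by
    intro n v
    by_cases hv : v ∈ s
    · obtain ⟨y, ⟨u, hu, rfl⟩, hy⟩ := Real.lt_sInf_add_pos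
        (Set.Nonempty.image ψ ⟨v, hTself v hv⟩)
        (show (0:ℝ) < 1/(n+1) by positivity)
      exact ⟨u, fun _ => ⟨hu, hy⟩⟩
    · exact ⟨v, fun h => absurd h hv⟩
  choose nx hnx using hex
  set w : ℕ → X := fun n => Nat.rec u0 (fun n v => nx n v) n with hwdef
  have hw0 : w 0 = u0 := rfl
  have hwsucc : ∀ n, w (n+1) = nx n (w n) := fun _ => rfl
  have hws : ∀ n, w n ∈ s := by
    intro n
    induction n with
    | zero => exact hu0
    | succ n ih => rw [hwsucc]; exact (hnx n (w n) ih).1.1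
  have hstep : ∀ n, (w (n+1) ∈ s ∧ ψ (w (n+1)) + α * ‖w (n+1) - w n‖ ≤ ψ (w n)) ∧
      ψ (w (n+1)) < sInf (ψ '' T (w n)) + 1/(n+1) := by
    intro n
    have := hnx n (w n) (hws n)
    rw [hwsucc]
    exact this
  have hmono : ∀ n, ψ (w (n+1)) + α * ‖w (n+1) - w n‖ ≤ ψ (w n) := fun n => (hstep n).1.2
  have hanti : Antitone (fun n => ψ (w n)) := by
    apply antitone_nat_of_succ_le
    intro n
    have := hmono n
    nlinarith [norm_nonneg (w (n+1) - w n), hα.le]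
  have hchain : ∀ n k, ψ (w (n+k)) + α * ‖w (n+k) - w n‖ ≤ ψ (w n) := by
    intro n k
    induction k with
    | zero => simp
    | succ k ih =>
      have h1 := hmono (n+k)
      have tri : ‖w (n+k+1) - w n‖ ≤ ‖w (n+k+1) - w (n+k)‖ + ‖w (n+k) - w n‖ := by
        simpa [dist_eq_norm] using dist_triangle (w (n+k+1)) (w (n+k)) (w n)
      have h2 := mul_le_mul_of_nonneg_left tri hα.le
      rw [mul_add] at h2
      show ψ (w (n+k+1)) + α * ‖w (n+k+1) - w n‖ ≤ ψ (w n)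
      linarith
  have hbdd : BddBelow (Set.range fun n => ψ (w n)) :=
    ⟨m, by rintro y ⟨n, rfl⟩; exact hbd _ (hws n)⟩
  set L := ⨅ n, ψ (w n) with hL
  have hLle : ∀ n, L ≤ ψ (w n) := fun n => ciInf_le hbdd n
  have htend : Tendsto (fun n => ψ (w n)) atTop (𝓝 L) := tendsto_atTop_ciInf hanti hbdd
  have hcauchy : CauchySeq w := by
    apply cauchySeq_of_le_tendsto_0 (fun N => (ψ (w N) - L)/α)
    · have key : ∀ a b N : ℕ, N ≤ a → a ≤ b → dist (w a) (w b) ≤ (ψ (w N) - L)/α := by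
        intro a b N hNa hab
        obtain ⟨k, rfl⟩ := Nat.exists_eq_add_of_le hab
        have h1 := hchain a k
        have h2 : ψ (w a) ≤ ψ (w N) := hanti hNa
        have h3 := hLle (a+k)
        rw [dist_eq_norm, norm_sub_rev]
        rw [le_div_iff₀ hα]
        linarith [mul_comm α ‖w (a+k) - w a‖]
      intro n m' N hn hm
      rcases le_total n m' with h | h
      · exact key n m' N hn h
      · rw [dist_comm]; exact key m' n N hm h
    · have : Tendsto (fun N => (ψ (w N) - L)/α) atTop (𝓝 ((L - L)/α)) :=
        (htend.sub tendsto_const_nhds).div_const α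
      simpa using this
  obtain ⟨ub, hub⟩ := cauchySeq_tendsto_of_complete hcauchy
  have hubs : ub ∈ s := hs.mem_of_tendsto hub (Eventually.of_forall hws)
  have hψub : ψ ub ≤ L := by
    by_contra h
    push_neg at h
    obtain ⟨y, hy1, hy2⟩ := exists_between h
    have h2 := hub.eventually (hlsc ub y hy2)
    have h3 := htend.eventually_lt_const hy1
    obtain ⟨n, hn1, hn2⟩ := (h2.and h3).exists
    linarith
  have hnear : ∀ n, ψ ub + α * ‖ub - w n‖ ≤ ψ (w n) := by
    intro n
    have h5 : Tendsto (fun k => n + k) atTop atTop :=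
      tendsto_atTop_mono (fun k => Nat.le_add_left k n) tendsto_id
    have hlim : Tendsto (fun k => α * ‖w (n+k) - w n‖) atTop (𝓝 (α * ‖ub - w n‖)) :=
      (((hub.comp h5).sub tendsto_const_nhds).norm).const_mul α
    have hlim2 : Tendsto (fun k => ψ (w n) - ψ (w (n+k))) atTop (𝓝 (ψ (w n) - L)) :=
      tendsto_const_nhds.sub (htend.comp h5)
    have hle : α * ‖ub - w n‖ ≤ ψ (w n) - L :=
      le_of_tendsto_of_tendsto' hlim hlim2 (fun k => by linarith [hchain n k])
    linarith
  refine ⟨ub, hubs, by simpa [hw0] using hnear 0, ?_⟩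
  intro u hu
  by_contra hcon
  push_neg at hcon
  have humem : ∀ n, u ∈ T (w n) := by
    intro n
    refine ⟨hu, ?_⟩
    have tri : ‖u - w n‖ ≤ ‖u - ub‖ + ‖ub - w n‖ := by
      simpa [dist_eq_norm] using dist_triangle u ub (w n)
    have h2 := mul_le_mul_of_nonneg_left tri hα.le
    rw [mul_add] at h2
    linarith [hnear n]
  have hinfle : ∀ n, sInf (ψ '' T (w n)) ≤ ψ u :=
    fun n => csInf_le (hTbdd _) ⟨u, humem n, rfl⟩
  have hup : ∀ n : ℕ, ψ (w (n+1)) ≤ ψ u + 1/(n+1) :=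
    fun n => le_of_lt (lt_of_lt_of_le (hstep n).2 (by linarith [hinfle n]))
  have h6 : Tendsto (fun n : ℕ => ψ (w (n+1))) atTop (𝓝 L) :=
    htend.comp (tendsto_atTop_mono (fun k => Nat.le_succ k) tendsto_id)
  have h7 : Tendsto (fun n : ℕ => ψ u + 1/(n+1)) atTop (𝓝 (ψ u + 0)) :=
    tendsto_const_nhds.add (by exact_mod_cast tendsto_one_div_add_atTop_nhds_zero_nat (𝕜 := ℝ))
  have h8 : L ≤ ψ u + 0 := le_of_tendsto_of_tendsto' h6 h7 hup
  nlinarith [norm_nonneg (u - ub), hα.le]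

/-- approximate projections carry approximate subgradients of `φ`. -/
theorem stmt_10 [CompleteSpace X] (f : X → EReal) (φ : X → ℝ) (g : X → ℝ)
    (hfbot : ∀ x, f x ≠ ⊥) (hφpos : ∀ x, 0 ≤ φ x)
    (hφlsc : LowerSemicontinuous φ)
    (hg : ∀ x, (g x : EReal) = infConv f φ x)
    (ε η : ℝ) (hε : 0 < ε) (hη : 0 < η) (x0 : X)
    (p : X →L[ℝ] ℝ) (hp : p ∈ frechetSubdiff g ε x0) :
    ∃ wt w0 : X,
      f wt + ((φ (wt - x0) : ℝ) : EReal) < (g x0 : EReal) + ((η ^ 2 : ℝ) : EReal) ∧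
      ‖w0 - wt‖ < η ∧
      -p ∈ frechetSubdiff φ (ε + η) (w0 - x0) := by
  obtain ⟨δ, hδpos, hball⟩ := Metric.eventually_nhds_iff.mp (hp (η/2) (by positivity))
  set r := min (δ/2) (η/2) with hrdef
  have hrpos : 0 < r := lt_min (by linarith) (by linarith)
  have hrδ : r < δ := lt_of_le_of_lt (min_le_left _ _) (by linarith)
  set σ := min (η^2/4) (η*r/4) with hσdef
  have hσpos : 0 < σ := lt_min (by positivity) (by positivity)
  have hlt : infConv f φ x0 < ((g x0 + σ : ℝ) : EReal) := by
    rw [← hg x0]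
    exact_mod_cast (by linarith : g x0 < g x0 + σ)
  unfold infConv at hlt
  obtain ⟨wt, hwt⟩ := iInf_lt_iff.mp hlt
  have hftop : f wt ≠ ⊤ := by
    intro h
    rw [h, EReal.top_add_of_ne_bot (by exact EReal.coe_ne_bot _)] at hwt
    exact absurd hwt not_top_lt
  set a := (f wt).toReal with ha
  have hfa : f wt = (a : EReal) := (EReal.coe_toReal hftop (hfbot wt)).symm
  rw [hfa] at hwt
  have hga : a + φ (wt - x0) < g x0 + σ := by exact_mod_cast hwt
  set ut := wt - x0 with hut
  set ψ := fun u => φ u + p (u - ut) + (ε + η/2) * ‖u - ut‖ with hψ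
  have hψlsc : LowerSemicontinuous ψ := by
    apply LowerSemicontinuous.add
    · exact hφlsc.add ((p.continuous.comp ((continuous_id.sub continuous_const))).lowerSemicontinuous)
    · exact (continuous_const.mul ((continuous_id.sub continuous_const).norm)).lowerSemicontinuous
  set s := Metric.closedBall ut r with hsdef
  have hgap : ∀ u ∈ s, φ ut - σ ≤ ψ u := by
    intro u hu
    have hun : ‖u - ut‖ ≤ r := by rwa [Metric.mem_closedBall, dist_eq_norm] at hu
    have hnrm : ‖ut - u‖ = ‖u - ut‖ := norm_sub_rev _ _
    have hx : dist (x0 + (ut - u)) x0 < δ := by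
      rw [dist_eq_norm]
      have : x0 + (ut - u) - x0 = ut - u := by abel
      rw [this, hnrm]
      linarith
    have h1 := hball hx
    have hx2 : x0 + (ut - u) - x0 = ut - u := by abel
    rw [hx2] at h1
    have h2 : g (x0 + (ut - u)) ≤ a + φ u := by
      have harg : wt - (x0 + (ut - u)) = u := by rw [hut]; abel
      have h3 : (g (x0 + (ut - u)) : EReal) ≤ (a : EReal) + (φ u : EReal) := by
        rw [hg]
        refine le_trans (iInf_le _ wt) ?_
        rw [harg, hfa]
      exact_mod_cast h3
    have hpn : p (ut - u) = -(p (u - ut)) := by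
      rw [show ut - u = -(u - ut) by abel, map_neg]
    rw [hpn, hnrm] at h1
    simp only [hψ]
    linarith
  obtain ⟨ub, hubs, h1, h2⟩ := ekeland_aux s Metric.isClosed_closedBall ψ hψlsc (φ ut - σ) hgap
    (η/2) (by positivity) ut (Metric.mem_closedBall_self hrpos.le)
  have hψut : ψ ut = φ ut := by simp [hψ]
  rw [hψut] at h1
  have hgap2 := hgap ub hubs
  have hub0 : (η/2) * ‖ub - ut‖ ≤ σ := by
    have := hψut
    simp only [hψ] at h1 hgap2
    linarith
  have hub1 : ‖ub - ut‖ ≤ η/2 := by nlinarith [min_le_left (η^2/4) (η*r/4)]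
  have hub2 : ‖ub - ut‖ ≤ r/2 := by nlinarith [min_le_right (η^2/4) (η*r/4)]
  refine ⟨wt, ub + x0, ?_, ?_, ?_⟩
  · rw [hfa]
    have hη2 : (0:ℝ) < η^2 := by positivity
    have : a + φ (wt - x0) < g x0 + η^2 := by
      have := min_le_left (η^2/4) (η*r/4)
      have hga' : a + φ ut < g x0 + σ := hga
      rw [← hut]
      linarith
    exact_mod_cast this
  · have heq : ub + x0 - wt = ub - ut := by rw [hut]; abel
    rw [heq]
    linarith
  · intro ρ hρ
    have hw0 : ub + x0 - x0 = ub := by abel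
    rw [hw0, Metric.eventually_nhds_iff]
    refine ⟨r/2, by positivity, ?_⟩
    intro u hu
    rw [dist_eq_norm] at hu
    have tri : ‖u - ut‖ ≤ ‖u - ub‖ + ‖ub - ut‖ := by
      simpa [dist_eq_norm] using dist_triangle u ub ut
    have hus : u ∈ s := by
      rw [hsdef, Metric.mem_closedBall, dist_eq_norm]
      linarith
    have h3 := h2 u hus
    simp only [hψ] at h3
    have hp3 : p (u - ut) - p (ub - ut) = p (u - ub) := by
      rw [← map_sub]
      congr 1
      abel
    have hc : (0:ℝ) ≤ ε + η/2 := by linarith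
    have hexp : (ε + η/2) * ‖u - ut‖ ≤ (ε + η/2) * ‖u - ub‖ + (ε + η/2) * ‖ub - ut‖ := by
      calc (ε + η/2) * ‖u - ut‖ ≤ (ε + η/2) * (‖u - ub‖ + ‖ub - ut‖) :=
            mul_le_mul_of_nonneg_left tri hc
        _ = (ε + η/2) * ‖u - ub‖ + (ε + η/2) * ‖ub - ut‖ := by ring
    have hρt : 0 ≤ ρ * ‖u - ub‖ := mul_nonneg hρ.le (norm_nonneg _)
    have hsplit : (ε + η + ρ) * ‖u - ub‖
        = (ε + η/2) * ‖u - ub‖ + (η/2) * ‖u - ub‖ + ρ * ‖u - ub‖ := by ring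
    simp only [ContinuousLinearMap.neg_apply]
    linarith
end

section
/- Suppose f: X → (-∞,∞] is lower semicontinuous. Let ε > 0, η > 0, x̄ ∈ X, and x* ∈ ∂̂_ε(f⊕φ)(x̄). Then there exist w̃, w̄ ∈ dom f such that ‖w̄−w̃‖ ≤ η and x* ∈ ∂̂_{ε+η} f(w̄). If moreover φ is subadditive, then additionally f(w̃) + φ(w̄−x̄) ≤ (f⊕φ)(x̄) + φ(w̄−w̃) + η. -/
set_option maxHeartbeats 1000000


open Filter Topology Set Bornology

variable {X : Type*} [NormedAddCommGroup X] [NormedSpace ℝ X]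

lemma ekeland_aux_s11 {M : Type*} [MetricSpace M] [CompleteSpace M] (F : M → ℝ)
    (hF : LowerSemicontinuous F) (m : ℝ) (hm : ∀ x, m ≤ F x)
    (t : ℝ) (ht : 0 < t) (x0 : M) :
    ∃ z : M, F z + t * dist z x0 ≤ F x0 ∧ ∀ x, F z ≤ F x + t * dist x z := by
  set S : M → Set M := fun a => {x | F x + t * dist x a ≤ F a} with hS
  have hself : ∀ a, a ∈ S a := by intro a; simp [hS]
  have htrans : ∀ a b x, b ∈ S a → x ∈ S b → x ∈ S a := by
    intro a b x hb hx
    simp only [hS, Set.mem_setOf_eq] at *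
    have htri : dist x a ≤ dist x b + dist b a := dist_triangle x b a
    nlinarith [dist_nonneg (x := x) (y := b), dist_nonneg (x := b) (y := a)]
  have hne : ∀ a, (F '' S a).Nonempty := fun a => ⟨F a, a, hself a, rfl⟩
  have hbdd : ∀ a, BddBelow (F '' S a) := by
    intro a; exact ⟨m, by rintro y ⟨x, -, rfl⟩; exact hm x⟩
  have key : ∀ (n : ℕ) (a : M), ∃ x, x ∈ S a ∧ F x ≤ sInf (F '' S a) + (1/2)^(n+1) := by
    intro n a
    obtain ⟨y, ⟨x, hx, rfl⟩, hy⟩ := exists_lt_of_csInf_lt (hne a)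
      (show sInf (F '' S a) < sInf (F '' S a) + (1/2)^(n+1) by nlinarith [pow_pos (by norm_num : (0:ℝ) < 1/2) (n+1)])
    exact ⟨x, hx, hy.le⟩
  choose next hnext1 hnext2 using key
  set seq : ℕ → M := fun n => Nat.rec x0 next n with hseq
  have hseq0 : seq 0 = x0 := rfl
  have hseqS : ∀ n, seq (n+1) = next n (seq n) := fun n => rfl
  have hchain : ∀ n, seq (n+1) ∈ S (seq n) := fun n => hnext1 n (seq n)
  have hC : ∀ n k, seq (n+k) ∈ S (seq n) := by
    intro n k
    induction k with
    | zero => exact hself _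
    | succ k ih => exact htrans _ _ _ ih (by rw [show n + (k+1) = (n+k)+1 from rfl]; exact hchain (n+k))
  have hCle : ∀ n k, n ≤ k → seq k ∈ S (seq n) := by
    intro n k hnk; obtain ⟨j, rfl⟩ := Nat.exists_eq_add_of_le hnk; exact hC n j
  have hanti : Antitone (fun n => F (seq n)) := by
    apply antitone_nat_of_succ_le
    intro n
    have := hchain n
    simp only [hS, Set.mem_setOf_eq] at this
    nlinarith [dist_nonneg (x := seq (n+1)) (y := seq n)]
  have hbddb : BddBelow (Set.range fun n => F (seq n)) := ⟨m, by rintro y ⟨n, rfl⟩; exact hm _⟩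
  have htend : Tendsto (fun n => F (seq n)) atTop (𝓝 (⨅ n, F (seq n))) :=
    tendsto_atTop_ciInf hanti hbddb
  set L := ⨅ n, F (seq n) with hL
  have hLle : ∀ n, L ≤ F (seq n) := fun n => ciInf_le hbddb n
  have hcauchy : CauchySeq seq := by
    rw [Metric.cauchySeq_iff']
    intro εc hεc
    obtain ⟨N, hN⟩ := (Metric.tendsto_atTop.mp htend) (t * εc) (by positivity)
    refine ⟨N, fun n hn => ?_⟩
    have h1 := hCle N n hn
    simp only [hS, Set.mem_setOf_eq] at h1
    have h2 : |F (seq N) - L| < t * εc := by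
      have := hN N le_rfl; rwa [Real.dist_eq] at this
    have h3 : L ≤ F (seq n) := hLle n
    rw [abs_lt] at h2
    nlinarith
  obtain ⟨z, hz⟩ := cauchySeq_tendsto_of_complete hcauchy
  have hzS : ∀ n, z ∈ S (seq n) := by
    intro n
    by_contra hcon
    simp only [hS, Set.mem_setOf_eq, not_le] at hcon
    set c := F z + t * dist z (seq n) - F (seq n) with hc
    have hcpos : 0 < c := by linarith
    have h1 : ∀ᶠ k in atTop, F z - c/2 < F (seq k) :=
      hz.eventually (hF z (F z - c/2) (by linarith))
    have h2 : Tendsto (fun k => t * dist (seq k) (seq n)) atTop (𝓝 (t * dist z (seq n))) :=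
      (((continuous_id.dist continuous_const).tendsto z).comp hz).const_mul t
    have h3 : ∀ᶠ k in atTop, t * dist z (seq n) - c/2 < t * dist (seq k) (seq n) :=
      h2.eventually_const_lt (by linarith)
    obtain ⟨k, hk1, hk2, hk3⟩ := (h1.and (h3.and (eventually_ge_atTop n))).exists
    have h4 := hCle n k hk3
    simp only [hS, Set.mem_setOf_eq] at h4
    nlinarith [hk1, hk2]
  have hz0 := hzS 0
  simp only [hS, Set.mem_setOf_eq, hseq0] at hz0
  refine ⟨z, hz0, fun x => ?_⟩
  by_contra hcon
  push_neg at hcon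
  have hxS : ∀ n, x ∈ S (seq n) := by
    intro n
    refine htrans _ z x (hzS n) ?_
    simp only [hS, Set.mem_setOf_eq]
    linarith
  have hFz_le : ∀ n : ℕ, F z ≤ F x + (1/2)^(n+1) := by
    intro n
    have h1 : sInf (F '' S (seq n)) ≤ F x := csInf_le (hbdd _) ⟨x, hxS n, rfl⟩
    have h2 := hnext2 n (seq n)
    rw [← hseqS n] at h2
    have h3 := hzS (n+1)
    simp only [hS, Set.mem_setOf_eq] at h3
    nlinarith [dist_nonneg (x := z) (y := seq (n+1))]
  have hFzx : F z ≤ F x := by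
    have : Tendsto (fun n : ℕ => F x + (1/2)^(n+1)) atTop (𝓝 (F x + 0)) := by
      apply Tendsto.const_add
      have : Tendsto (fun n : ℕ => ((1:ℝ)/2)^n) atTop (𝓝 0) :=
        tendsto_pow_atTop_nhds_zero_of_lt_one (by norm_num) (by norm_num)
      exact (this.comp (tendsto_add_atTop_nat 1))
    rw [add_zero] at this
    exact ge_of_tendsto this (Eventually.of_forall hFz_le)
  nlinarith [dist_nonneg (x := x) (y := z), ht]

/-- approximate projections carry approximate subgradients of `f`. -/
theorem stmt_11 [CompleteSpace X] (f : X → EReal) (φ : X → ℝ) (g : X → ℝ)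
    (hfbot : ∀ x, f x ≠ ⊥) (hφpos : ∀ x, 0 ≤ φ x)
    (hflsc : LowerSemicontinuous f)
    (hg : ∀ x, (g x : EReal) = infConv f φ x)
    (ε η : ℝ) (hε : 0 < ε) (hη : 0 < η) (x0 : X)
    (p : X →L[ℝ] ℝ) (hp : p ∈ frechetSubdiff g ε x0) :
    ∃ wt w0 : X, f wt ≠ ⊤ ∧ f w0 ≠ ⊤ ∧ ‖w0 - wt‖ ≤ η ∧
      p ∈ frechetSubdiffE f (ε + η) w0 ∧
      ((∀ x y : X, φ (x + y) ≤ φ x + φ y) →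
        f wt + ((φ (w0 - x0) : ℝ) : EReal) ≤
          (g x0 : EReal) + ((φ (w0 - wt) : ℝ) : EReal) + ((η : ℝ) : EReal)) := by
    -- step 1: local subgradient inequality for g
  obtain ⟨δ, hδpos, hδ⟩ := Metric.eventually_nhds_iff.mp (hp (η/2) (by linarith))
  set δ' : ℝ := δ/2 with hδ'
  have hδ'pos : 0 < δ' := by positivity
  set c : ℝ := ε + η/2 with hc
  have hcpos : 0 < c := by positivity
  set t : ℝ := η/2 with ht
  have htpos : 0 < t := by positivity
  set lam : ℝ := min (min η (δ'/2)) 1 with hlam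
  have hlampos : 0 < lam := by
    simp only [hlam, lt_min_iff]; exact ⟨⟨hη, by positivity⟩, one_pos⟩
  have hlam_le_η : lam ≤ η := le_trans (min_le_left _ _) (min_le_left _ _)
  have hlam_le_δ : lam ≤ δ'/2 := le_trans (min_le_left _ _) (min_le_right _ _)
  have hlam_le_1 : lam ≤ 1 := min_le_right _ _
  set α : ℝ := t * lam with hα
  have hαpos : 0 < α := by positivity
  have hα_le : α ≤ η/2 := by
    rw [hα, ht]; nlinarith
  -- step 2: choose approximate minimizer wt
  have hinf : infConv f φ x0 < ((g x0 + α : ℝ) : EReal) := by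
    rw [← hg x0]; exact_mod_cast (by linarith : g x0 < g x0 + α)
  rw [infConv, iInf_lt_iff] at hinf
  obtain ⟨wt, hwt⟩ := hinf
  have hwt_ne_top : f wt ≠ ⊤ := by
    intro h; rw [h, EReal.top_add_coe] at hwt; exact (not_top_lt hwt)
  set a : ℝ := (f wt).toReal with ha
  have hfwt : f wt = (a : EReal) := (EReal.coe_toReal hwt_ne_top (hfbot wt)).symm
  have hwt_real : a + φ (wt - x0) < g x0 + α := by
    rw [hfwt, ← EReal.coe_add, EReal.coe_lt_coe_iff] at hwt; exact hwt
  -- lower bound for g x0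
  have hg_le : g x0 ≤ a + φ (wt - x0) := by
    have : (g x0 : EReal) ≤ f wt + ((φ (wt - x0) : ℝ) : EReal) := by
      rw [hg x0, infConv]; exact iInf_le _ wt
    rw [hfwt, ← EReal.coe_add, EReal.coe_le_coe_iff] at this; exact this
  set m : ℝ := g x0 - φ (wt - x0) - p wt with hm
  -- step 3: key local inequality
  have hkey : ∀ w : X, ‖w - wt‖ ≤ δ' → ∀ b : ℝ, f w = (b : EReal) →
      p w - p wt ≤ b + φ (wt - x0) - g x0 + c * ‖w - wt‖ := by
    intro w hw b hb
    set x : X := x0 + (w - wt) with hx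
    have hx1 : x - x0 = w - wt := by rw [hx]; abel
    have hx2 : w - x = wt - x0 := by rw [hx]; abel
    have hdx : dist x x0 < δ := by
      rw [dist_eq_norm, hx1]
      calc ‖w - wt‖ ≤ δ' := hw
        _ < δ := by rw [hδ']; linarith
    have h1 := hδ hdx
    rw [hx1] at h1
    have h2 : g x ≤ b + φ (wt - x0) := by
      have : (g x : EReal) ≤ f w + ((φ (w - x) : ℝ) : EReal) := by
        rw [hg x, infConv]; exact iInf_le _ w
      rw [hb, hx2, ← EReal.coe_add, EReal.coe_le_coe_iff] at this; exact this
    have h3 : p (w - wt) = p w - p wt := map_sub p w wt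
    rw [h3] at h1
    calc p w - p wt ≤ g x - g x0 + c * ‖w - wt‖ := h1
      _ ≤ b + φ (wt - x0) - g x0 + c * ‖w - wt‖ := by linarith
  -- the perturbed function
  set r : X → ℝ := fun w => c * ‖w - wt‖ - p w with hr
  have hr_cont : Continuous r := by
    apply Continuous.sub
    · exact continuous_const.mul ((continuous_id.sub continuous_const).norm)
    · exact p.continuous
  set Fe : X → EReal := fun w => f w + ((r w : ℝ) : EReal) with hFe
  have hFe_real : ∀ w : X, ∀ b : ℝ, f w = (b : EReal) → Fe w = ((b + r w : ℝ) : EReal) := by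
    intro w b hb; rw [hFe]; simp only; rw [hb, EReal.coe_add]
  have hFe_m : ∀ w : X, ‖w - wt‖ ≤ δ' → (m : EReal) ≤ Fe w := by
    intro w hw
    rcases eq_or_ne (f w) ⊤ with h | h
    · rw [hFe]; simp only [h, EReal.top_add_coe]; exact le_top
    · have hb : f w = (((f w).toReal : ℝ) : EReal) := (EReal.coe_toReal h (hfbot w)).symm
      rw [hFe_real w _ hb, EReal.coe_le_coe_iff]
      have := hkey w hw _ hb
      rw [hm, hr]; simp only; linarith
  set C : ℝ := a - p wt with hC
  have hFe_wt : Fe wt = (C : EReal) := by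
    rw [hFe_real wt a hfwt, hC, hr]; simp [sub_eq_add_neg]
  have hmC : m ≤ C := by
    have := hFe_m wt (by simp [norm_sub_rev, sub_self]; positivity)
    rw [hFe_wt, EReal.coe_le_coe_iff] at this; exact this
  have hCm : C ≤ m + α := by rw [hC, hm]; linarith
  -- the domain
  set K : Set X := Metric.closedBall wt δ' with hK
  haveI : CompleteSpace K := Metric.isClosed_closedBall.completeSpace_coe
  have hwtK : wt ∈ K := Metric.mem_closedBall_self (le_of_lt hδ'pos)
  have hmemnorm : ∀ w : X, w ∈ K → ‖w - wt‖ ≤ δ' := by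
    intro w hw; rw [hK, Metric.mem_closedBall, dist_eq_norm] at hw; exact hw
  -- capped real function
  set Ft : K → ℝ := fun w => (min (Fe w) ((C + 1 : ℝ) : EReal)).toReal with hFt
  have hcoe : ∀ w : K, (Ft w : EReal) = min (Fe w) ((C + 1 : ℝ) : EReal) := by
    intro w
    rw [hFt]
    apply EReal.coe_toReal
    · exact ne_top_of_le_ne_top (EReal.coe_ne_top _) (min_le_right _ _)
    · apply ne_bot_of_le_ne_bot (EReal.coe_ne_bot m)
      apply le_min (hFe_m w (hmemnorm w w.2))
      exact_mod_cast (by linarith : m ≤ C + 1)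
  have hFt_m : ∀ w : K, m ≤ Ft w := by
    intro w
    rw [← EReal.coe_le_coe_iff, hcoe w]
    apply le_min (hFe_m w (hmemnorm w w.2))
    exact_mod_cast (by linarith : m ≤ C + 1)
  -- lower semicontinuity of Ft
  have hFt_lsc : LowerSemicontinuous Ft := by
    intro v0 y hy
    rw [gt_iff_lt, ← EReal.coe_lt_coe_iff, hcoe v0, lt_min_iff] at hy
    obtain ⟨hy1, hy2⟩ := hy
    have hy2' : y < C + 1 := EReal.coe_lt_coe_iff.mp hy2
    -- find intermediate real q with (y - r v0) < q and q < f v0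
    have hstep : ∃ q : ℝ, y - r (v0 : X) < q ∧ ((q : ℝ) : EReal) < f (v0 : X) := by
      rcases eq_or_ne (f (v0 : X)) ⊤ with h | h
      · exact ⟨y - r v0 + 1, by linarith, by rw [h]; exact EReal.coe_lt_top _⟩
      · have hb : f (v0 : X) = (((f (v0:X)).toReal : ℝ) : EReal) :=
          (EReal.coe_toReal h (hfbot _)).symm
        set b0 := (f (v0:X)).toReal with hb0
        have : y - r v0 < b0 := by
          rw [hFe_real (v0:X) b0 hb] at hy1
          rw [EReal.coe_lt_coe_iff] at hy1
          linarith
        obtain ⟨q, hq1, hq2⟩ := exists_between this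
        exact ⟨q, hq1, by rw [hb, EReal.coe_lt_coe_iff]; exact hq2⟩
    obtain ⟨q, hq1, hq2⟩ := hstep
    have ev1 : ∀ᶠ x in 𝓝 (v0 : X), (q : EReal) < f x := hflsc (v0 : X) q hq2
    have ev2 : ∀ᶠ x in 𝓝 (v0 : X), y - q < r x :=
      (hr_cont.continuousAt).eventually_const_lt (by linarith)
    have ev := ev1.and ev2
    have := (continuous_subtype_val.tendsto v0).eventually ev
    filter_upwards [this] with v hv
    rw [gt_iff_lt, ← EReal.coe_lt_coe_iff, hcoe v, lt_min_iff]
    constructor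
    · rw [hFe]
      calc ((y:ℝ) : EReal) = (((y - q) + q : ℝ) : EReal) := by norm_num
        _ < ((r (v:X) + q : ℝ) : EReal) := by
            rw [EReal.coe_lt_coe_iff]; linarith [hv.2]
        _ = ((r (v:X) : ℝ) : EReal) + (q : EReal) := EReal.coe_add _ _
        _ ≤ ((r (v:X) : ℝ) : EReal) + f (v : X) := add_le_add_right hv.1.le _
        _ = f (v:X) + ((r (v:X) : ℝ) : EReal) := add_comm _ _
    · exact_mod_cast hy2'
  -- Ekeland
  obtain ⟨z, hzA, hzB⟩ := ekeland_aux_s11 Ft hFt_lsc m hFt_m t htpos ⟨wt, hwtK⟩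
  set w0 : X := (z : X) with hw0
  have hFt_wt : Ft ⟨wt, hwtK⟩ = C := by
    rw [← EReal.coe_eq_coe_iff, hcoe ⟨wt, hwtK⟩, hFe_wt]
    rw [min_eq_left]
    exact_mod_cast (by linarith : C ≤ C + 1)
  have hFtz_le_C : Ft z ≤ C := by
    have h0 : 0 ≤ t * dist z ⟨wt, hwtK⟩ := by positivity
    rw [hFt_wt] at hzA; linarith
  have hFez : (Ft z : EReal) = Fe w0 := by
    rcases le_or_gt ((C + 1 : ℝ) : EReal) (Fe w0) with h | h
    · exfalso
      have : (Ft z : EReal) = ((C + 1 : ℝ) : EReal) := by rw [hcoe z, min_eq_right h]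
      rw [EReal.coe_eq_coe_iff] at this
      linarith
    · rw [hcoe z, min_eq_left h.le]
  have hFew0_le : Fe w0 ≤ (C : EReal) := by
    rw [← hFez]; exact_mod_cast hFtz_le_C
  have hw0_ne_top : f w0 ≠ ⊤ := by
    intro h
    rw [hFe] at hFew0_le
    simp only [h, EReal.top_add_coe] at hFew0_le
    exact absurd hFew0_le (by simp)
  set b0 : ℝ := (f w0).toReal with hb0def
  have hfw0 : f w0 = (b0 : EReal) := (EReal.coe_toReal hw0_ne_top (hfbot w0)).symm
  have hFtz_real : Ft z = b0 + r w0 := by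
    rw [← EReal.coe_eq_coe_iff, hFez, hFe_real w0 b0 hfw0]
  -- distance bound
  have hdist : ‖w0 - wt‖ ≤ lam := by
    have h1 : t * dist z ⟨wt, hwtK⟩ ≤ C - Ft z := by rw [hFt_wt] at hzA; linarith
    have h2 : m ≤ Ft z := hFt_m z
    have h3 : t * dist z ⟨wt, hwtK⟩ ≤ α := by linarith
    have h4 : dist z ⟨wt, hwtK⟩ ≤ lam := by
      rw [hα] at h3; nlinarith [htpos]
    rwa [Subtype.dist_eq, dist_eq_norm] at h4
  have hdist_η : ‖w0 - wt‖ ≤ η := le_trans hdist hlam_le_η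
  refine ⟨wt, w0, hwt_ne_top, hw0_ne_top, hdist_η, ?_, ?_⟩
  · -- subdifferential claim
    intro η' hη'
    apply Metric.eventually_nhds_iff.mpr
    refine ⟨δ'/2, by positivity, fun x hx => ?_⟩
    rw [dist_eq_norm] at hx
    have hxK : x ∈ K := by
      rw [hK, Metric.mem_closedBall, dist_eq_norm]
      calc ‖x - wt‖ ≤ ‖x - w0‖ + ‖w0 - wt‖ := by
            have := norm_add_le (x - w0) (w0 - wt)
            simpa [sub_add_sub_cancel] using this
        _ ≤ δ'/2 + δ'/2 := by
            have := le_trans hdist hlam_le_δ; linarith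
        _ = δ' := by ring
    rcases eq_or_ne (f x) ⊤ with h | h
    · rw [h, hfw0, EReal.top_sub_coe, EReal.top_add_coe]
      exact le_top
    · set bx : ℝ := (f x).toReal with hbx
      have hfx : f x = (bx : EReal) := (EReal.coe_toReal h (hfbot x)).symm
      have hB := hzB ⟨x, hxK⟩
      have hdxz : dist (⟨x, hxK⟩ : K) z = ‖x - w0‖ := by
        rw [Subtype.dist_eq, dist_eq_norm]
      have hFtx : Ft ⟨x, hxK⟩ ≤ bx + r x := by
        rw [← EReal.coe_le_coe_iff, hcoe ⟨x, hxK⟩]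
        calc min (Fe x) ((C+1:ℝ):EReal) ≤ Fe x := min_le_left _ _
          _ = ((bx + r x : ℝ) : EReal) := hFe_real x bx hfx
      rw [hFtz_real, hdxz] at hB
      have hmain : b0 + r w0 ≤ bx + r x + t * ‖x - w0‖ := le_trans hB (by linarith)
      have htri : ‖x - wt‖ ≤ ‖x - w0‖ + ‖w0 - wt‖ := by
        have := norm_add_le (x - w0) (w0 - wt)
        simpa [sub_add_sub_cancel] using this
      have hfinal : p x - p w0 ≤ bx - b0 + (ε + η + η') * ‖x - w0‖ := by
        rw [hr] at hmain
        simp only at hmain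
        have hc1 : c * ‖x - wt‖ ≤ c * ‖x - w0‖ + c * ‖w0 - wt‖ := by nlinarith
        have hnn : 0 ≤ ‖x - w0‖ := norm_nonneg _
        nlinarith
      rw [hfx, hfw0, map_sub, ← EReal.coe_sub, ← EReal.coe_add, EReal.coe_le_coe_iff]
      linarith
  · -- subadditivity claim
    intro hsub
    rw [hfwt, ← EReal.coe_add, ← EReal.coe_add, ← EReal.coe_add, EReal.coe_le_coe_iff]
    have h1 : φ (w0 - x0) ≤ φ (w0 - wt) + φ (wt - x0) := by
      have := hsub (w0 - wt) (wt - x0)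
      simpa [sub_add_sub_cancel] using this
    linarith [hα_le, hwt_real]
end

section
/- Let x̄ ∈ S₀ := {x : (f⊕φ)(x) = f(x)}. Suppose φ is coercive with constant m > 0, subadditive, continuous at 0 with φ(0)=0, and f is lower semicontinuous on X and Lipschitz continuous on dom f with constant ℓ, 0 ≤ ℓ < m. Then the limiting (Mordukhovich) subdifferential satisfies ∂(f⊕φ)(x̄) ⊂ ∂f(x̄) ∩ [−∂φ(0)]. -/
open Filter Topology Set Bornology

variable {X : Type*} [NormedAddCommGroup X] [NormedSpace ℝ X]

/-- squeeze continuity -/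
lemma cont_of_phibound (φ : X → ℝ) (hφ0 : φ 0 = 0) (hφcont : ContinuousAt φ 0)
    (ψ : X → ℝ) (hψ : ∀ a b : X, |ψ a - ψ b| ≤ φ (a - b) + φ (b - a)) :
    Continuous ψ := by
  rw [continuous_iff_continuousAt]
  intro b
  have h1 : Tendsto (fun a : X => a - b) (𝓝 b) (𝓝 0) := by
    have := (continuous_id.sub (continuous_const (y := b))).tendsto b
    simpa only [Pi.sub_def, id_eq, sub_self] using this
  have h2 : Tendsto (fun a : X => b - a) (𝓝 b) (𝓝 0) := by
    have := ((continuous_const (y := b)).sub continuous_id).tendsto b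
    simpa only [Pi.sub_def, id_eq, sub_self] using this
  have hb1 : Tendsto (fun a => φ (a - b)) (𝓝 b) (𝓝 0) := by
    have := hφcont.tendsto.comp h1
    simpa [hφ0, Function.comp_def] using this
  have hb2 : Tendsto (fun a => φ (b - a)) (𝓝 b) (𝓝 0) := by
    have := hφcont.tendsto.comp h2
    simpa [hφ0, Function.comp_def] using this
  have key : Tendsto (fun a => dist (ψ a) (ψ b)) (𝓝 b) (𝓝 0) := by
    refine squeeze_zero (fun a => dist_nonneg) (fun a => ?_) (by simpa using hb1.add hb2)
    rw [Real.dist_eq]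
    exact hψ a b
  exact (tendsto_iff_dist_tendsto_zero).2 key

lemma ekeland_cont {α : Type*} [MetricSpace α] [CompleteSpace α]
    {s : Set α} (hs : IsClosed s) {h : α → ℝ} (hh : Continuous h)
    {B : ℝ} (hB : ∀ y ∈ s, B ≤ h y) {u : α} (hu : u ∈ s)
    {ρ σ : ℝ} (hρ : 0 < ρ) (hσ : 0 < σ)
    (happrox : ∀ y ∈ s, h u ≤ h y + ρ) :
    ∃ v ∈ s, h v ≤ h u ∧ σ * dist v u ≤ ρ ∧ ∀ w ∈ s, h v - σ * dist w v ≤ h w := by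
  classical
  set S : α → Set α := fun v => {w | w ∈ s ∧ h w + σ * dist w v ≤ h v} with hS
  have hSself : ∀ v ∈ s, v ∈ S v := by
    intro v hv; exact ⟨hv, by simp⟩
  have hStrans : ∀ a b c, b ∈ S a → c ∈ S b → c ∈ S a := by
    rintro a b c ⟨hbs, hb⟩ ⟨hcs, hc⟩
    refine ⟨hcs, ?_⟩
    have ht : dist c a ≤ dist c b + dist b a := dist_triangle c b a
    have := mul_le_mul_of_nonneg_left ht hσ.le
    linarith [hb, hc]
  have hbddS : ∀ v, BddBelow (h '' S v) := by
    intro v; exact ⟨B, by rintro _ ⟨w, hw, rfl⟩; exact hB w hw.1⟩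
  have hchoice : ∀ v, v ∈ s → ∀ n : ℕ, ∃ w, w ∈ S v ∧
      h w ≤ sInf (h '' S v) + (1 / (n + 1) : ℝ) := by
    intro v hv n
    have hne : (h '' S v).Nonempty := ⟨h v, v, hSself v hv, rfl⟩
    have hlt : sInf (h '' S v) < sInf (h '' S v) + (1 / (n + 1) : ℝ) :=
      lt_add_of_pos_right _ (by positivity)
    obtain ⟨y, hy, hylt⟩ := (csInf_lt_iff (hbddS v) hne).1 hlt
    obtain ⟨w, hw, rfl⟩ := hy
    exact ⟨w, hw, hylt.le⟩
  let next : α → ℕ → α := fun v n => if hv : v ∈ s then (hchoice v hv n).choose else v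
  have hnext : ∀ v (hv : v ∈ s) n, next v n ∈ S v ∧
      h (next v n) ≤ sInf (h '' S v) + (1 / (n + 1) : ℝ) := by
    intro v hv n
    simp only [next, dif_pos hv]
    exact (hchoice v hv n).choose_spec
  let c : ℕ → α := fun n => Nat.rec u (fun n vn => next vn n) n
  have hc0 : c 0 = u := rfl
  have hcsucc : ∀ n, c (n + 1) = next (c n) n := fun n => rfl
  have hcs : ∀ n, c n ∈ s := by
    intro n; induction n with
    | zero => exact hu
    | succ n ih => rw [hcsucc]; exact (hnext (c n) ih n).1.1
  have hstep : ∀ n, c (n + 1) ∈ S (c n) ∧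
      h (c (n + 1)) ≤ sInf (h '' S (c n)) + (1 / (n + 1) : ℝ) := by
    intro n; rw [hcsucc]; exact hnext (c n) (hcs n) n
  have hmem : ∀ n m, n ≤ m → c m ∈ S (c n) := by
    intro n m hnm
    induction m, hnm using Nat.le_induction with
    | base => exact hSself (c n) (hcs n)
    | succ m hnm ih => exact hStrans _ _ _ ih (hstep m).1
  have hanti : ∀ n m, n ≤ m → h (c m) ≤ h (c n) := by
    intro n m hnm
    have := (hmem n m hnm).2
    nlinarith [dist_nonneg (x := c m) (y := c n), hσ.le]
  have hbddR : BddBelow (Set.range fun n => h (c n)) := by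
    refine ⟨B, ?_⟩; rintro _ ⟨n, rfl⟩; exact hB _ (hcs n)
  set L := ⨅ n, h (c n) with hL
  have hLle : ∀ n, L ≤ h (c n) := fun n => ciInf_le hbddR n
  have hLtend : Tendsto (fun n => h (c n)) atTop (𝓝 L) :=
    tendsto_atTop_ciInf (fun n m hnm => hanti n m hnm) hbddR
  have hCauchy : CauchySeq c := by
    refine cauchySeq_of_le_tendsto_0 (fun N => (h (c N) - L) / σ) ?_ ?_
    · intro n m N hn hm
      rcases le_total n m with hnm | hmn
      · have := (hmem n m hnm).2
        rw [le_div_iff₀ hσ]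
        have h1 := hanti N n hn
        have h2 := hLle m
        have hdc : dist (c n) (c m) = dist (c m) (c n) := dist_comm _ _
        nlinarith
      · have := (hmem m n hmn).2
        rw [le_div_iff₀ hσ]
        have h1 := hanti N m hm
        have h2 := hLle n
        have hdc : dist (c n) (c m) = dist (c m) (c n) := dist_comm _ _
        nlinarith
    · have : Tendsto (fun N => (h (c N) - L) / σ) atTop (𝓝 ((L - L) / σ)) :=
        ((hLtend.sub tendsto_const_nhds).div_const σ)
      simpa using this
  obtain ⟨V, hV⟩ := cauchySeq_tendsto_of_complete hCauchy
  have hVs : V ∈ s := hs.mem_of_tendsto hV (Filter.Eventually.of_forall hcs)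
  have hclosedS : ∀ v, IsClosed (S v) := by
    intro v
    have : S v = s ∩ {w | h w + σ * dist w v ≤ h v} := by ext w; exact Iff.rfl
    rw [this]
    exact hs.inter (isClosed_le (hh.add (continuous_const.mul
      (continuous_id.dist continuous_const))) continuous_const)
  have hVmem : ∀ n, V ∈ S (c n) := by
    intro n
    refine (hclosedS (c n)).mem_of_tendsto hV ?_
    filter_upwards [Filter.eventually_atTop.2 ⟨n, fun m hm => hmem n m hm⟩] with m hm using hm
  have hV0 := (hVmem 0).2
  rw [hc0] at hV0
  have hdnn : 0 ≤ σ * dist V u := mul_nonneg hσ.le dist_nonneg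
  refine ⟨V, hVs, by linarith, by linarith [happrox V hVs], ?_⟩
  intro w hw
  by_contra hcon
  push_neg at hcon
  have hwS : ∀ n, w ∈ S (c n) := by
    intro n
    refine ⟨hw, ?_⟩
    have hVn := (hVmem n).2
    have ht : dist w (c n) ≤ dist w V + dist V (c n) := dist_triangle w V (c n)
    have := mul_le_mul_of_nonneg_left ht hσ.le
    nlinarith
  have hle : ∀ n : ℕ, h (c (n + 1)) ≤ h w + (1 / (n + 1) : ℝ) := by
    intro n
    have := (hstep n).2
    have h2 : sInf (h '' S (c n)) ≤ h w := csInf_le (hbddS (c n)) ⟨w, hwS n, rfl⟩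
    linarith
  have htend : Tendsto (fun n => h (c (n + 1))) atTop (𝓝 (h V)) :=
    ((hh.tendsto V).comp hV).comp (tendsto_add_atTop_nat 1)
  have htend2 : Tendsto (fun n : ℕ => h w + (1 / (n + 1) : ℝ)) atTop (𝓝 (h w + 0)) :=
    tendsto_const_nhds.add tendsto_one_div_add_atTop_nhds_zero_nat
  have : h V ≤ h w + 0 := le_of_tendsto_of_tendsto' htend htend2 hle
  have hd : 0 ≤ σ * dist w V := mul_nonneg hσ.le dist_nonneg
  linarith

lemma main_step (f : X → EReal) (φ : X → ℝ) (g : X → ℝ) (m ℓ : ℝ) (x0 : X)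
    [CompleteSpace X]
    (hφpos : ∀ x, 0 ≤ φ x) (hφ0 : φ 0 = 0)
    (hℓ : 0 ≤ ℓ) (hlm : ℓ < m)
    (hcoer : ∀ x : X, m * ‖x‖ ≤ φ x)
    (hgcont : Continuous g) (hφc : Continuous φ)
    (hg : ∀ x, (g x : EReal) = infConv f φ x)
    (hfval : ∀ u, f u ≠ ⊤ → f u = ((g u : ℝ) : EReal))
    (hDcl : IsClosed {y : X | f y ≠ ⊤})
    (hglip : ∀ y, f y ≠ ⊤ → g x0 - ℓ * ‖y - x0‖ ≤ g y)
    (x : X) (ε δ : ℝ) (hε : 0 ≤ ε) (hδ : 0 < δ) (hδ1 : δ ≤ 1)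
    (q : X →L[ℝ] ℝ) (hq : q ∈ frechetSubdiff g ε x) :
    ∃ v z : X,
      f v ≠ ⊤ ∧
      ‖v - x‖ ≤ (g x - g x0 + δ + ℓ * ‖x - x0‖) / (m - ℓ) + δ ∧
      q ∈ frechetSubdiffE f (ε + 3 * δ) v ∧
      ‖z‖ ≤ (g x - g x0 + δ + ℓ * ‖x - x0‖) / (m - ℓ) + δ ∧
      -q ∈ frechetSubdiff φ (ε + 3 * δ) z := by
  classical
  have hmℓ : 0 < m - ℓ := by linarith
  have hF1 : ∀ x' w : X, (g x' : EReal) ≤ f w + ((φ (w - x') : ℝ) : EReal) := by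
    intro x' w; rw [hg x']; exact iInf_le _ w
  -- radius of validity of the subgradient inequality
  obtain ⟨r, hrpos, hr⟩ : ∃ r > 0, ∀ y : X, dist y x < r →
      q (y - x) ≤ g y - g x + (ε + δ) * ‖y - x‖ := by
    have h := hq δ hδ
    rw [Metric.eventually_nhds_iff] at h
    obtain ⟨r, hrpos, hr⟩ := h
    exact ⟨r, hrpos, fun y hy => hr hy⟩
  set lam := min δ (r / 8) with hlamdef
  have hlampos : 0 < lam := lt_min hδ (by linarith)
  have hlamδ : lam ≤ δ := min_le_left _ _
  have hlamr : lam ≤ r / 8 := min_le_right _ _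
  set ρ := lam * δ with hρdef
  have hρpos : 0 < ρ := mul_pos hlampos hδ
  have hρδ : ρ ≤ δ := by
    calc lam * δ ≤ 1 * δ := by nlinarith
    _ = δ := one_mul δ
  -- approximate minimizer u
  obtain ⟨u, hu⟩ : ∃ u, f u + ((φ (u - x) : ℝ) : EReal) < ((g x + ρ : ℝ) : EReal) := by
    have h1 : (g x : EReal) < ((g x + ρ : ℝ) : EReal) := by
      exact_mod_cast lt_add_of_pos_right (g x) hρpos
    rw [hg x] at h1
    exact iInf_lt_iff.1 h1
  have hutop : f u ≠ ⊤ := by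
    intro h; rw [h, EReal.top_add_coe] at hu; exact (not_top_lt hu)
  have hfu : f u = ((g u : ℝ) : EReal) := hfval u hutop
  have humain : g u + φ (u - x) < g x + ρ := by
    rw [hfu] at hu; exact_mod_cast hu
  have hux : ‖u - x‖ ≤ (g x - g x0 + δ + ℓ * ‖x - x0‖) / (m - ℓ) := by
    rw [le_div_iff₀ hmℓ]
    have h1 := hcoer (u - x)
    have h2 := hglip u hutop
    have h3 : ‖u - x0‖ ≤ ‖u - x‖ + ‖x - x0‖ := by
      have := norm_add_le (u - x) (x - x0)
      rwa [sub_add_sub_cancel] at this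
    have h4 : ℓ * ‖u - x0‖ ≤ ℓ * (‖u - x‖ + ‖x - x0‖) := by
      exact mul_le_mul_of_nonneg_left h3 hℓ
    nlinarith
  -- Part A : Ekeland on D ∩ closedBall u (r/2)
  set s1 : Set X := {y : X | f y ≠ ⊤} ∩ Metric.closedBall u (r / 2) with hs1def
  have hs1closed : IsClosed s1 := hDcl.inter Metric.isClosed_closedBall
  have hu1 : u ∈ s1 := ⟨hutop, Metric.mem_closedBall_self (by linarith)⟩
  set h1 : X → ℝ := fun y => g y - q y + (ε + 2 * δ) * ‖y - u‖ with hh1def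
  have hh1c : Continuous h1 :=
    (hgcont.sub q.continuous).add
      (continuous_const.mul ((continuous_id.sub continuous_const).norm))
  have hqb : ∀ y : X, q y ≤ ‖q‖ * ‖y‖ := by
    intro y
    refine le_trans (le_abs_self _) ?_
    rw [← Real.norm_eq_abs]
    exact q.le_opNorm y
  have hqb' : ∀ y : X, -(‖q‖ * ‖y‖) ≤ q y := by
    intro y
    have := neg_abs_le (q y)
    have h2 : |q y| ≤ ‖q‖ * ‖y‖ := by rw [← Real.norm_eq_abs]; exact q.le_opNorm y
    linarith
  have hB1 : ∀ y ∈ s1, g x0 - ℓ * (‖u - x0‖ + r / 2) - ‖q‖ * (‖u‖ + r / 2) ≤ h1 y := by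
    rintro y ⟨hyD, hyB⟩
    have hgy := hglip y hyD
    have hyu : ‖y - u‖ ≤ r / 2 := by rw [← dist_eq_norm]; exact hyB
    have h5 : ‖y - x0‖ ≤ ‖u - x0‖ + r / 2 := by
      have := norm_add_le (y - u) (u - x0)
      rw [sub_add_sub_cancel] at this
      linarith
    have h6 : ‖y‖ ≤ ‖u‖ + r / 2 := by
      have := norm_add_le (y - u) u
      rw [sub_add_cancel] at this
      linarith
    have h7 := hqb y
    have h8 : ℓ * ‖y - x0‖ ≤ ℓ * (‖u - x0‖ + r / 2) := mul_le_mul_of_nonneg_left h5 hℓ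
    have h9 : ‖q‖ * ‖y‖ ≤ ‖q‖ * (‖u‖ + r / 2) := mul_le_mul_of_nonneg_left h6 (norm_nonneg q)
    have h10 : 0 ≤ (ε + 2 * δ) * ‖y - u‖ := mul_nonneg (by linarith) (norm_nonneg _)
    simp only [hh1def]
    linarith
  have happ1 : ∀ y ∈ s1, h1 u ≤ h1 y + ρ := by
    rintro y ⟨hyD, hyB⟩
    have hyu : ‖y - u‖ ≤ r / 2 := by rw [← dist_eq_norm]; exact hyB
    have hz : dist (x + (y - u)) x < r := by
      rw [dist_eq_norm, add_sub_cancel_left]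
      linarith
    have hq1 := hr _ hz
    rw [add_sub_cancel_left] at hq1
    have hgz : g (x + (y - u)) ≤ g y + φ (u - x) := by
      have hkey := hF1 (x + (y - u)) y
      have he : y - (x + (y - u)) = u - x := by abel
      rw [he, hfval y hyD] at hkey
      exact_mod_cast hkey
    have hqs : q (y - u) = q y - q u := map_sub q y u
    have hu0 : h1 u = g u - q u := by simp [hh1def]
    rw [hu0]
    simp only [hh1def]
    have h10 : 0 ≤ δ * ‖y - u‖ := mul_nonneg hδ.le (norm_nonneg _)
    have hexp : (ε + 2 * δ) * ‖y - u‖ = (ε + δ) * ‖y - u‖ + δ * ‖y - u‖ := by ring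
    linarith
  obtain ⟨v, hvs1, hvle, hvdist, hvmin⟩ :=
    ekeland_cont hs1closed hh1c hB1 hu1 hρpos hδ happ1
  have hvu : dist v u ≤ lam := by nlinarith
  have hvsub : q ∈ frechetSubdiffE f (ε + 3 * δ) v := by
    intro η hη
    have hball : Metric.ball v (r / 4) ∈ 𝓝 v := Metric.ball_mem_nhds v (by linarith)
    filter_upwards [hball] with w hw
    by_cases hwD : f w = ⊤
    · rw [hwD, hfval v hvs1.1, EReal.top_sub_coe, EReal.top_add_coe]
      exact le_top
    · have hwv : ‖w - v‖ < r / 4 := by rw [← dist_eq_norm]; exact hw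
      have hws1 : w ∈ s1 := by
        refine ⟨hwD, ?_⟩
        rw [Metric.mem_closedBall]
        calc dist w u ≤ dist w v + dist v u := dist_triangle w v u
        _ ≤ r / 4 + lam := by
            rw [dist_eq_norm]
            exact add_le_add hwv.le hvu
        _ ≤ r / 2 := by linarith
      have hm1 := hvmin w hws1
      simp only [hh1def] at hm1
      rw [dist_eq_norm] at hm1
      have hnorm : ‖w - u‖ ≤ ‖v - u‖ + ‖w - v‖ := by
        have := norm_add_le (w - v) (v - u)
        rw [sub_add_sub_cancel] at this
        linarith
      have hc1 : (ε + 2 * δ) * ‖w - u‖ ≤ (ε + 2 * δ) * ‖v - u‖ + (ε + 2 * δ) * ‖w - v‖ := by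
        have := mul_le_mul_of_nonneg_left hnorm (by linarith : (0:ℝ) ≤ ε + 2 * δ)
        linarith [mul_add (ε + 2 * δ) ‖v - u‖ ‖w - v‖, this]
      have hc2 : 0 ≤ η * ‖w - v‖ := mul_nonneg hη.le (norm_nonneg _)
      have hqs : q (w - v) = q w - q v := map_sub q w v
      have hexp : (ε + 3 * δ + η) * ‖w - v‖ =
          (ε + 2 * δ) * ‖w - v‖ + δ * ‖w - v‖ + η * ‖w - v‖ := by ring
      have hreal : q (w - v) ≤ g w - g v + (ε + 3 * δ + η) * ‖w - v‖ := by
        rw [hqs, hexp]; linarith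
      rw [hfval w hwD, hfval v hvs1.1, ← EReal.coe_sub, ← EReal.coe_add]
      exact_mod_cast hreal
  have hvbound : ‖v - x‖ ≤ (g x - g x0 + δ + ℓ * ‖x - x0‖) / (m - ℓ) + δ := by
    have h3 : ‖v - x‖ ≤ ‖v - u‖ + ‖u - x‖ := by
      have := norm_add_le (v - u) (u - x)
      rwa [sub_add_sub_cancel] at this
    have h4 : ‖v - u‖ ≤ lam := by rw [← dist_eq_norm]; exact hvu
    linarith
  -- Part B : Ekeland for φ around z0 = u - x
  set z0 : X := u - x with hz0def
  set s2 : Set X := Metric.closedBall z0 (r / 2) with hs2def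
  have hs2closed : IsClosed s2 := Metric.isClosed_closedBall
  have hz01 : z0 ∈ s2 := Metric.mem_closedBall_self (by linarith)
  set h2 : X → ℝ := fun w => φ w + q w + (ε + 2 * δ) * ‖w - z0‖ with hh2def
  have hh2c : Continuous h2 :=
    (hφc.add q.continuous).add
      (continuous_const.mul ((continuous_id.sub continuous_const).norm))
  have hB2 : ∀ w ∈ s2, -(‖q‖ * (‖z0‖ + r / 2)) ≤ h2 w := by
    intro w hw
    have hwn : ‖w - z0‖ ≤ r / 2 := by rw [← dist_eq_norm]; exact hw
    have h6 : ‖w‖ ≤ ‖z0‖ + r / 2 := by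
      have := norm_add_le (w - z0) z0
      rw [sub_add_cancel] at this
      linarith
    have h7 := hqb' w
    have h9 : ‖q‖ * ‖w‖ ≤ ‖q‖ * (‖z0‖ + r / 2) := mul_le_mul_of_nonneg_left h6 (norm_nonneg q)
    have h10 : 0 ≤ (ε + 2 * δ) * ‖w - z0‖ := mul_nonneg (by linarith) (norm_nonneg _)
    have h11 := hφpos w
    simp only [hh2def]
    linarith
  have happ2 : ∀ w ∈ s2, h2 z0 ≤ h2 w + ρ := by
    intro w hw
    have hwn : ‖w - z0‖ ≤ r / 2 := by rw [← dist_eq_norm]; exact hw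
    have hz : dist (x + (z0 - w)) x < r := by
      rw [dist_eq_norm, add_sub_cancel_left, norm_sub_rev]
      linarith
    have hq2 := hr _ hz
    rw [add_sub_cancel_left] at hq2
    have hgz2 : g (x + (z0 - w)) ≤ g u + φ w := by
      have hkey := hF1 (x + (z0 - w)) u
      have he : u - (x + (z0 - w)) = w := by rw [hz0def]; abel
      rw [he, hfu] at hkey
      exact_mod_cast hkey
    have hqs : q (z0 - w) = q z0 - q w := map_sub q z0 w
    have hns : ‖z0 - w‖ = ‖w - z0‖ := norm_sub_rev _ _
    have hz00 : h2 z0 = φ z0 + q z0 := by simp [hh2def]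
    rw [hz00]
    simp only [hh2def]
    have h10 : 0 ≤ δ * ‖w - z0‖ := mul_nonneg hδ.le (norm_nonneg _)
    have hexp : (ε + 2 * δ) * ‖w - z0‖ = (ε + δ) * ‖w - z0‖ + δ * ‖w - z0‖ := by ring
    rw [hns] at hq2
    linarith
  obtain ⟨z, hzs2, hzle, hzdist, hzmin⟩ :=
    ekeland_cont hs2closed hh2c hB2 hz01 hρpos hδ happ2
  have hzz0 : dist z z0 ≤ lam := by nlinarith
  have hzsub : -q ∈ frechetSubdiff φ (ε + 3 * δ) z := by
    intro η hη
    have hball : Metric.ball z (r / 4) ∈ 𝓝 z := Metric.ball_mem_nhds z (by linarith)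
    filter_upwards [hball] with w hw
    have hwz : ‖w - z‖ < r / 4 := by rw [← dist_eq_norm]; exact hw
    have hws2 : w ∈ s2 := by
      rw [Metric.mem_closedBall]
      calc dist w z0 ≤ dist w z + dist z z0 := dist_triangle w z z0
      _ ≤ r / 4 + lam := by
          rw [dist_eq_norm]
          exact add_le_add hwz.le hzz0
      _ ≤ r / 2 := by linarith
    have hm2 := hzmin w hws2
    simp only [hh2def] at hm2
    rw [dist_eq_norm] at hm2
    have hnorm : ‖w - z0‖ ≤ ‖z - z0‖ + ‖w - z‖ := by
      have := norm_add_le (w - z) (z - z0)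
      rw [sub_add_sub_cancel] at this
      linarith
    have hc1 : (ε + 2 * δ) * ‖w - z0‖ ≤ (ε + 2 * δ) * ‖z - z0‖ + (ε + 2 * δ) * ‖w - z‖ := by
      have := mul_le_mul_of_nonneg_left hnorm (by linarith : (0:ℝ) ≤ ε + 2 * δ)
      linarith [mul_add (ε + 2 * δ) ‖z - z0‖ ‖w - z‖, this]
    have hc2 : 0 ≤ η * ‖w - z‖ := mul_nonneg hη.le (norm_nonneg _)
    have hqs : (-q) (w - z) = q z - q w := by
      rw [ContinuousLinearMap.neg_apply, map_sub]; ring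
    have hexp : (ε + 3 * δ + η) * ‖w - z‖ =
        (ε + 2 * δ) * ‖w - z‖ + δ * ‖w - z‖ + η * ‖w - z‖ := by ring
    rw [hqs, hexp]
    linarith
  have hzbound : ‖z‖ ≤ (g x - g x0 + δ + ℓ * ‖x - x0‖) / (m - ℓ) + δ := by
    have h3 : ‖z‖ ≤ ‖z - z0‖ + ‖z0‖ := by
      have := norm_add_le (z - z0) z0
      rwa [sub_add_cancel] at this
    have h4 : ‖z - z0‖ ≤ lam := by rw [← dist_eq_norm]; exact hzz0
    have h5 : ‖z0‖ ≤ (g x - g x0 + δ + ℓ * ‖x - x0‖) / (m - ℓ) := hux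
    linarith
  exact ⟨v, z, hvs1.1, hvbound, hvsub, hzbound, hzsub⟩

/-- limiting subdifferential upper estimate at points of `S₀`. -/
theorem stmt_12 [CompleteSpace X] (f : X → EReal) (φ : X → ℝ) (g : X → ℝ)
    (hfbot : ∀ x, f x ≠ ⊥) (hflsc : LowerSemicontinuous f)
    (hφpos : ∀ x, 0 ≤ φ x) (hφ0 : φ 0 = 0) (hφcont : ContinuousAt φ 0)
    (hsub : ∀ x y : X, φ (x + y) ≤ φ x + φ y)
    (m ℓ : ℝ) (hm : 0 < m) (hℓ : 0 ≤ ℓ) (hlm : ℓ < m)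
    (hcoer : ∀ x : X, m * ‖x‖ ≤ φ x)
    (hLip : ∀ x y : X, f x ≠ ⊤ → f y ≠ ⊤ → |(f x).toReal - (f y).toReal| ≤ ℓ * ‖x - y‖)
    (hg : ∀ x, (g x : EReal) = infConv f φ x)
    (x0 : X) (hx0 : (g x0 : EReal) = f x0) :
    limitingSubdiff g x0 ⊆
      limitingSubdiffE f x0 ∩ {p : X →L[ℝ] ℝ | -p ∈ limitingSubdiff φ (0 : X)} := by
  have hφc : Continuous φ := by
    refine cont_of_phibound φ hφ0 hφcont φ (fun a b => ?_)
    refine abs_sub_le_iff.2 ⟨?_, ?_⟩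
    · have h := hsub (a - b) b
      have e : a - b + b = a := by abel
      rw [e] at h
      linarith [hφpos (b - a)]
    · have h := hsub (b - a) a
      have e : b - a + a = b := by abel
      rw [e] at h
      linarith [hφpos (a - b)]
  have hF1 : ∀ x' w : X, (g x' : EReal) ≤ f w + ((φ (w - x') : ℝ) : EReal) := by
    intro x' w; rw [hg x']; exact iInf_le _ w
  have hx0top : f x0 ≠ ⊤ := by rw [← hx0]; exact EReal.coe_ne_top _
  have hfval : ∀ u, f u ≠ ⊤ → f u = ((g u : ℝ) : EReal) := by
    intro u hu
    refine le_antisymm ?_ ?_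
    · rw [hg u]
      simp only [infConv]
      refine le_iInf fun w => ?_
      by_cases hw : f w = ⊤
      · rw [hw, EReal.top_add_coe]; exact le_top
      · have hfur : f u = (((f u).toReal : ℝ) : EReal) := (EReal.coe_toReal hu (hfbot u)).symm
        have hfwr : f w = (((f w).toReal : ℝ) : EReal) := (EReal.coe_toReal hw (hfbot w)).symm
        rw [hfur, hfwr, ← EReal.coe_add]
        refine EReal.coe_le_coe_iff.2 ?_
        have hL := hLip u w hu hw
        have h1 : ℓ * ‖w - u‖ ≤ m * ‖w - u‖ := mul_le_mul_of_nonneg_right hlm.le (norm_nonneg _)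
        have h2 : m * ‖w - u‖ ≤ φ (w - u) := hcoer _
        have h3 : ‖u - w‖ = ‖w - u‖ := norm_sub_rev _ _
        rw [h3] at hL
        have h4 := abs_le.1 hL
        linarith [h4.2]
    · have h := hF1 u u
      simpa [sub_self, hφ0] using h
  have hgx0' : (f x0).toReal = g x0 := by rw [← hx0]; exact EReal.toReal_coe _
  have hglip : ∀ y, f y ≠ ⊤ → g x0 - ℓ * ‖y - x0‖ ≤ g y := by
    intro y hy
    have hL := hLip y x0 hy hx0top
    have h1 : (f y).toReal = g y := by rw [hfval y hy]; exact EReal.toReal_coe _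
    rw [h1, hgx0'] at hL
    linarith [(abs_le.1 hL).1]
  have hF2 : ∀ a b : X, g a ≤ g b + φ (b - a) := by
    intro a b
    have key : (↑(g a - φ (b - a)) : EReal) ≤ (g b : EReal) := by
      rw [hg b]
      simp only [infConv]
      refine le_iInf fun w => ?_
      by_cases hw : f w = ⊤
      · rw [hw, EReal.top_add_coe]; exact le_top
      · have hfwr : f w = (((f w).toReal : ℝ) : EReal) := (EReal.coe_toReal hw (hfbot w)).symm
        have h1 := hF1 a w
        rw [hfwr] at h1 ⊢
        rw [← EReal.coe_add] at h1 ⊢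
        have h2 : φ (w - a) ≤ φ (w - b) + φ (b - a) := by
          have h := hsub (w - b) (b - a)
          have e : w - b + (b - a) = w - a := by abel
          rwa [e] at h
        exact EReal.coe_le_coe_iff.2 (by linarith [EReal.coe_le_coe_iff.1 h1])
    have := EReal.coe_le_coe_iff.1 key
    linarith
  have hgcont : Continuous g := by
    refine cont_of_phibound φ hφ0 hφcont g (fun a b => ?_)
    refine abs_sub_le_iff.2 ⟨?_, ?_⟩
    · linarith [hF2 a b, hφpos (a - b)]
    · linarith [hF2 b a, hφpos (b - a)]
  have hDcl : IsClosed {y : X | f y ≠ ⊤} := by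
    rw [← isOpen_compl_iff]
    refine isOpen_iff_mem_nhds.2 ?_
    intro y hy
    simp only [mem_compl_iff, mem_setOf_eq, not_not] at hy
    have h1 : ∀ᶠ w in 𝓝 y, ((g y + 1 : ℝ) : EReal) < f w := by
      refine hflsc y _ ?_
      show ((g y + 1 : ℝ) : EReal) < f y
      rw [hy]; exact EReal.coe_lt_top _
    have h2 : ∀ᶠ w in 𝓝 y, g w < g y + 1 :=
      (hgcont.tendsto y).eventually_lt_const (by linarith)
    filter_upwards [h1, h2] with w hw1 hw2
    simp only [mem_compl_iff, mem_setOf_eq, not_not]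
    by_contra hwt
    rw [hfval w hwt] at hw1
    have : g y + 1 < g w := by exact_mod_cast hw1
    linarith
  intro p hp
  obtain ⟨x, ε, q, hεnn, hε0, hx, hgx, hqmem, hqp⟩ := hp
  set δ : ℕ → ℝ := fun k => 1 / (k + 1) with hδdef
  have hδpos : ∀ k, 0 < δ k := fun k => by positivity
  have hδ1 : ∀ k, δ k ≤ 1 := by
    intro k
    rw [hδdef]
    rw [div_le_one (by positivity)]
    linarith [Nat.cast_nonneg (α := ℝ) k]
  have hδ0 : Tendsto δ atTop (𝓝 0) := tendsto_one_div_add_atTop_nhds_zero_nat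
  have hstep := fun k => main_step f φ g m ℓ x0 hφpos hφ0 hℓ hlm hcoer hgcont hφc hg hfval
    hDcl hglip (x k) (ε k) (δ k) (hεnn k) (hδpos k) (hδ1 k) (q k) (hqmem k)
  choose v z hvtop hvbound hvsub hzbound hzsub using hstep
  set A : ℕ → ℝ := fun k => (g (x k) - g x0 + δ k + ℓ * ‖x k - x0‖) / (m - ℓ) + δ k with hAdef
  have hxnorm : Tendsto (fun k => ‖x k - x0‖) atTop (𝓝 0) := by
    have := tendsto_iff_dist_tendsto_zero.1 hx
    simpa [dist_eq_norm] using this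
  have hA : Tendsto A atTop (𝓝 0) := by
    have h1 : Tendsto (fun k => g (x k) - g x0 + δ k + ℓ * ‖x k - x0‖) atTop
        (𝓝 (g x0 - g x0 + 0 + ℓ * 0)) :=
      ((hgx.sub tendsto_const_nhds).add hδ0).add (hxnorm.const_mul ℓ)
    have h2 := (h1.div_const (m - ℓ)).add hδ0
    simp only [sub_self, mul_zero, add_zero, zero_add, zero_div] at h2
    exact h2
  have hε' : Tendsto (fun k => ε k + 3 * δ k) atTop (𝓝 0) := by
    have h := hε0.add (hδ0.const_mul 3)
    simp only [mul_zero, add_zero] at h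
    exact h
  have hε'nn : ∀ k, 0 ≤ ε k + 3 * δ k := fun k => by linarith [hεnn k, (hδpos k).le]
  have hvx0 : Tendsto v atTop (𝓝 x0) := by
    refine tendsto_iff_dist_tendsto_zero.2 ?_
    have hbd : Tendsto (fun k => A k + ‖x k - x0‖) atTop (𝓝 0) := by
      have h := hA.add hxnorm
      simp only [add_zero] at h
      exact h
    refine squeeze_zero (fun k => dist_nonneg) (fun k => ?_) hbd
    rw [dist_eq_norm]
    calc ‖v k - x0‖ ≤ ‖v k - x k‖ + ‖x k - x0‖ := by
          have := norm_add_le (v k - x k) (x k - x0)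
          rwa [sub_add_sub_cancel] at this
    _ ≤ A k + ‖x k - x0‖ := by
          have := hvbound k
          simp only [hAdef]
          linarith
  have hzx0 : Tendsto z atTop (𝓝 (0 : X)) := by
    refine tendsto_iff_dist_tendsto_zero.2 ?_
    refine squeeze_zero (fun k => dist_nonneg) (fun k => ?_) hA
    rw [dist_zero_right]
    exact hzbound k
  refine ⟨?_, ?_⟩
  · refine ⟨v, fun k => ε k + 3 * δ k, q, hε'nn, hε', hvx0, ?_, hvsub, hqp⟩
    have hgv : Tendsto (fun k => g (v k)) atTop (𝓝 (g x0)) := (hgcont.tendsto x0).comp hvx0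
    have hcoe : Tendsto (fun k => ((g (v k) : ℝ) : EReal)) atTop (𝓝 ((g x0 : ℝ) : EReal)) :=
      (continuous_coe_real_ereal.tendsto _).comp hgv
    rw [show f x0 = ((g x0 : ℝ) : EReal) from hx0.symm]
    exact Tendsto.congr (fun k => (hfval (v k) (hvtop k)).symm) hcoe
  · refine ⟨z, fun k => ε k + 3 * δ k, fun k => -(q k), hε'nn, hε', hzx0, ?_, hzsub, ?_⟩
    · exact (hφc.tendsto 0).comp hzx0
    · intro w
      have := (hqp w).neg
      simpa [ContinuousLinearMap.neg_apply] using this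
end

section
/- In the setting where X is finite dimensional, x̄ ∈ S₀, φ is coercive with constant m > 0, subadditive, positively homogeneous, continuous at 0 with φ(0)=0, and f is lower semicontinuous on X and Lipschitz continuous on dom f with constant 0 ≤ ℓ < m, the limiting subdifferential satisfies the equality ∂(f⊕φ)(x̄) = ∂f(x̄) ∩ [−∂φ(0)]. -/
open Filter Topology Set Bornology

variable {X : Type*} [NormedAddCommGroup X] [NormedSpace ℝ X]

section AuxLemmas

variable {X : Type*} [NormedAddCommGroup X] [NormedSpace ℝ X]

/-- Pointwise convergence of continuous linear functionals implies norm convergence,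
in finite dimensions. -/
lemma clm_tendsto_of_pointwise [FiniteDimensional ℝ X] (q : ℕ → X →L[ℝ] ℝ) (p : X →L[ℝ] ℝ)
    (h : ∀ v : X, Tendsto (fun k => q k v) atTop (𝓝 (p v))) :
    Tendsto q atTop (𝓝 p) := by
  classical
  let b := Module.finBasis ℝ X
  let Φ : (X →L[ℝ] ℝ) →ₗ[ℝ] (Fin (Module.finrank ℝ X) → ℝ) :=
    { toFun := fun q => fun i => q (b i)
      map_add' := by intro a c; ext i; simp
      map_smul' := by intro a c; ext i; simp }
  have hinj : Function.Injective Φ := by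
    intro q1 q2 hq
    apply ContinuousLinearMap.coe_injective
    apply b.ext
    intro i
    exact congrFun hq i
  have hsurj : Function.Surjective Φ := by
    intro c
    refine ⟨LinearMap.toContinuousLinearMap (b.constr ℝ c), ?_⟩
    ext i
    simp [Φ]
  let e : (X →L[ℝ] ℝ) ≃ₗ[ℝ] (Fin (Module.finrank ℝ X) → ℝ) :=
    LinearEquiv.ofBijective Φ ⟨hinj, hsurj⟩
  have hcont : Continuous e.symm := LinearMap.continuous_of_finiteDimensional _
  have h1 : Tendsto (fun k => e (q k)) atTop (𝓝 (e p)) := by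
    rw [tendsto_pi_nhds]
    intro i
    exact h (b i)
  have h3 := (hcont.tendsto (e p)).comp h1
  have h2 : (⇑e.symm ∘ fun k => e (q k)) = q := by
    funext k; simp
  rw [h2] at h3
  simpa using h3

/-- A lower semicontinuous `EReal`-valued function whose infimum is a finite value `a`
and whose sublevel set `{F ≤ a + 1}` is contained in a compact set attains its infimum. -/
lemma lsc_attains_min (F : X → EReal) (hF : LowerSemicontinuous F) (a : ℝ)
    (hinf : (⨅ w, F w) = (a : EReal)) (K : Set X) (hK : IsCompact K)
    (hKsub : ∀ w, F w ≤ ((a + 1 : ℝ) : EReal) → w ∈ K) :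
    ∃ w, F w = (a : EReal) := by
  set S : ℕ → Set X := fun n => {w | F w ≤ ((a + 1 / (n + 1) : ℝ) : EReal)} with hS
  have hanti : Antitone S := by
    intro i j hij w hw
    simp only [hS, mem_setOf_eq] at hw ⊢
    refine le_trans hw ?_
    rw [EReal.coe_le_coe_iff]
    have hij' : (i : ℝ) ≤ (j : ℝ) := Nat.cast_le.mpr hij
    have : (1 : ℝ) / (j + 1) ≤ 1 / (i + 1) := by
      apply one_div_le_one_div_of_le
      · positivity
      · linarith
    linarith
  have hsub : ∀ n, S n ⊆ K := by
    intro n w hw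
    simp only [hS, mem_setOf_eq] at hw
    apply hKsub
    refine le_trans hw ?_
    rw [EReal.coe_le_coe_iff]
    have h1 : (1 : ℝ) / (n + 1) ≤ 1 := by
      rw [div_le_one (by positivity)]; linarith [Nat.cast_nonneg' (α := ℝ) n]
    linarith
  have hclosed : ∀ n, IsClosed (S n) := fun n => hF.isClosed_preimage _
  have hcpt : ∀ n, IsCompact (S n) := fun n => hK.of_isClosed_subset (hclosed n) (hsub n)
  have hne : ∀ n, (S n).Nonempty := by
    intro n
    have : (⨅ w, F w) < ((a + 1 / (n + 1) : ℝ) : EReal) := by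
      rw [hinf, EReal.coe_lt_coe_iff]
      have : (0:ℝ) < 1 / (n+1) := by positivity
      linarith
    obtain ⟨w, hw⟩ := iInf_lt_iff.1 this
    exact ⟨w, by simp only [hS, mem_setOf_eq]; exact le_of_lt hw⟩
  have hdir : Directed (· ⊇ ·) S := by
    intro i j
    exact ⟨max i j, hanti (le_max_left i j), hanti (le_max_right i j)⟩
  obtain ⟨w, hw⟩ := IsCompact.nonempty_iInter_of_directed_nonempty_isCompact_isClosed
    S hdir hne hcpt hclosed
  refine ⟨w, le_antisymm ?_ (hinf ▸ iInf_le _ w)⟩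
  by_contra hlt
  push_neg at hlt
  obtain ⟨r, har, hrF⟩ := EReal.exists_between_coe_real hlt
  obtain ⟨n, hn⟩ := exists_nat_one_div_lt (sub_pos.2 (EReal.coe_lt_coe_iff.1 har))
  have hwn : w ∈ S n := mem_iInter.1 hw n
  simp only [hS, mem_setOf_eq] at hwn
  have h2 : ((a + 1 / (n + 1) : ℝ) : EReal) < (r : EReal) := by
    rw [EReal.coe_lt_coe_iff]; push_cast at hn ⊢; linarith
  exact absurd (lt_of_le_of_lt (le_trans hwn h2.le) hrF) (lt_irrefl _)

end AuxLemmas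

set_option maxHeartbeats 2000000 in
/-- limiting subdifferential equality in finite dimensions. -/
theorem stmt_13 [FiniteDimensional ℝ X] (f : X → EReal) (φ : X → ℝ) (g : X → ℝ)
    (hfbot : ∀ x, f x ≠ ⊥) (hflsc : LowerSemicontinuous f)
    (hφpos : ∀ x, 0 ≤ φ x) (hφ0 : φ 0 = 0) (hφcont : ContinuousAt φ 0)
    (hsub : ∀ x y : X, φ (x + y) ≤ φ x + φ y)
    (hpos : ∀ t : ℝ, 0 < t → ∀ x : X, φ (t • x) = t * φ x)
    (m ℓ : ℝ) (hm : 0 < m) (hℓ : 0 ≤ ℓ) (hlm : ℓ < m)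
    (hcoer : ∀ x : X, m * ‖x‖ ≤ φ x)
    (hLip : ∀ x y : X, f x ≠ ⊤ → f y ≠ ⊤ → |(f x).toReal - (f y).toReal| ≤ ℓ * ‖x - y‖)
    (hg : ∀ x, (g x : EReal) = infConv f φ x)
    (x0 : X) (hx0 : (g x0 : EReal) = f x0) :
    limitingSubdiff g x0 =
      limitingSubdiffE f x0 ∩ {p : X →L[ℝ] ℝ | -p ∈ limitingSubdiff φ (0 : X)} := by
  classical
  have hfx0 : f x0 = ((g x0 : ℝ) : EReal) := hx0.symm
  have hfx0top : f x0 ≠ ⊤ := by rw [hfx0]; exact EReal.coe_ne_top _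
  have hfx0real : (f x0).toReal = g x0 := by rw [hfx0]; exact EReal.toReal_coe _
  -- linear upper bound on φ
  obtain ⟨M, hM0, hMb⟩ : ∃ M > (0:ℝ), ∀ z, φ z ≤ M * ‖z‖ := by
    have h1 : ∀ᶠ z in 𝓝 (0:X), φ z < 1 := by
      have := hφcont (Iio_mem_nhds (show φ 0 < 1 by rw [hφ0]; norm_num))
      exact this
    rw [Metric.eventually_nhds_iff] at h1
    obtain ⟨δ, hδ, hball⟩ := h1
    refine ⟨2 / δ, by positivity, ?_⟩
    intro z
    by_cases hz : z = 0
    · simp [hz, hφ0]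
    · have hznorm : (0:ℝ) < ‖z‖ := norm_pos_iff.2 hz
      set t : ℝ := 2 * ‖z‖ / δ with ht
      have htpos : 0 < t := by positivity
      have hzt : z = t • (t⁻¹ • z) := by
        rw [smul_smul, mul_inv_cancel₀ (ne_of_gt htpos), one_smul]
      have hn : ‖t⁻¹ • z‖ = δ / 2 := by
        rw [norm_smul, norm_inv, Real.norm_eq_abs, abs_of_pos htpos, ht]
        field_simp
      have hφt : φ (t⁻¹ • z) < 1 := by
        apply hball
        rw [dist_zero_right, hn]
        linarith
      have : φ z = t * φ (t⁻¹ • z) := by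
        conv_lhs => rw [hzt]
        exact hpos t htpos _
      rw [this]
      calc t * φ (t⁻¹ • z) ≤ t * 1 := by
            apply mul_le_mul_of_nonneg_left (le_of_lt hφt) (le_of_lt htpos)
        _ = 2 * ‖z‖ / δ := by rw [mul_one]
        _ = 2 / δ * ‖z‖ := by ring
  -- φ is continuous
  have hφlip : ∀ a b : X, φ a ≤ φ b + M * ‖a - b‖ := by
    intro a b
    have h1 : φ a ≤ φ b + φ (a - b) := by
      have := hsub b (a - b)
      simpa using this
    linarith [hMb (a - b)]
  have hφc : Continuous φ := by
    rw [Metric.continuous_iff]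
    intro a ε hε
    refine ⟨ε / (M + 1), by positivity, ?_⟩
    intro b hb
    rw [Real.dist_eq, abs_lt]
    have h1 := hφlip a b
    have h2 := hφlip b a
    have h3 : ‖b - a‖ < ε / (M + 1) := by rwa [dist_eq_norm] at hb
    have h4 : ‖a - b‖ = ‖b - a‖ := norm_sub_rev _ _
    have h5 : M * ‖b - a‖ ≤ M * (ε / (M + 1)) := by nlinarith
    have h6 : M * (ε / (M + 1)) < ε := by
      rw [mul_comm M, div_mul_eq_mul_div, div_lt_iff₀ (by positivity)]
      nlinarith
    constructor <;> nlinarith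
  -- g ≤ f
  have hglef : ∀ x, (g x : EReal) ≤ f x := by
    intro x
    rw [hg x]
    calc infConv f φ x ≤ f x + ((φ (x - x) : ℝ) : EReal) := iInf_le _ x
      _ = f x := by simp [hφ0]
  -- g = f on dom f
  have hgeq : ∀ x, f x ≠ ⊤ → f x = ((g x : ℝ) : EReal) := by
    intro x hx
    refine le_antisymm ?_ (hglef x)
    rw [hg x]
    apply le_iInf
    intro w
    by_cases hw : f w = ⊤
    · rw [hw]
      rw [EReal.top_add_of_ne_bot (EReal.coe_ne_bot _)]
      exact le_top
    · rw [← EReal.coe_toReal hx (hfbot x), ← EReal.coe_toReal hw (hfbot w),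
        ← EReal.coe_add, EReal.coe_le_coe_iff]
      have h1 := hLip x w hx hw
      have h2 := hcoer (w - x)
      have h3 : ‖x - w‖ = ‖w - x‖ := norm_sub_rev _ _
      have h4 : (f x).toReal - (f w).toReal ≤ ℓ * ‖x - w‖ :=
        le_trans (le_abs_self _) h1
      nlinarith [mul_le_mul_of_nonneg_right (le_of_lt hlm) (norm_nonneg (x - w))]
  -- existence of minimizers
  have hmin : ∀ x : X, ∃ w, f w ≠ ⊤ ∧
      ((g x : ℝ) : EReal) = f w + ((φ (w - x) : ℝ) : EReal) := by
    intro x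
    have hFlsc : LowerSemicontinuous (fun w => f w + ((φ (w - x) : ℝ) : EReal)) := by
      apply hflsc.add'
      · exact ((EReal.continuous_coe_iff.2 continuous_id).comp
          (hφc.comp (continuous_id.sub continuous_const))).lowerSemicontinuous
      · intro w
        apply EReal.continuousAt_add
        · exact Or.inr (EReal.coe_ne_bot _)
        · exact Or.inr (EReal.coe_ne_top _)
    have hinf : (⨅ w, f w + ((φ (w - x) : ℝ) : EReal)) = ((g x : ℝ) : EReal) :=
      (hg x).symm
    set R : ℝ := (g x + 1 - g x0 + m * ‖x - x0‖) / (m - ℓ) with hR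
    have hKsub : ∀ w, f w + ((φ (w - x) : ℝ) : EReal) ≤ ((g x + 1 : ℝ) : EReal) →
        w ∈ Metric.closedBall x0 R := by
      intro w hw
      have hwt : f w ≠ ⊤ := by
        intro h
        rw [h, EReal.top_add_of_ne_bot (EReal.coe_ne_bot _)] at hw
        exact absurd (lt_of_le_of_lt hw (EReal.coe_lt_top _)) (lt_irrefl _)
      rw [← EReal.coe_toReal hwt (hfbot w), ← EReal.coe_add, EReal.coe_le_coe_iff] at hw
      have h1 := hLip w x0 hwt hfx0top
      rw [hfx0real] at h1
      have h2 : g x0 - (f w).toReal ≤ ℓ * ‖w - x0‖ := by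
        have := neg_abs_le ((f w).toReal - g x0)
        linarith [abs_le.1 h1 |>.2]
      have h3 := hcoer (w - x)
      have h4 : ‖w - x0‖ ≤ ‖w - x‖ + ‖x - x0‖ := norm_sub_le_norm_sub_add_norm_sub _ _ _
      rw [Metric.mem_closedBall, dist_eq_norm, hR]
      rw [le_div_iff₀ (by linarith)]
      nlinarith
    obtain ⟨w, hw⟩ := lsc_attains_min _ hFlsc (g x) hinf _ (isCompact_closedBall x0 R) hKsub
    have hwt : f w ≠ ⊤ := by
      intro h
      rw [h, EReal.top_add_of_ne_bot (EReal.coe_ne_bot _)] at hw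
      exact EReal.coe_ne_top _ hw.symm
    exact ⟨w, hwt, hw.symm⟩
  -- g is Lipschitz
  have hgLip : ∀ x y : X, g x ≤ g y + M * ‖x - y‖ := by
    intro x y
    obtain ⟨w, hwt, hwe⟩ := hmin y
    have hid : g y = (f w).toReal + φ (w - y) := by
      rw [← EReal.coe_toReal hwt (hfbot w), ← EReal.coe_add, EReal.coe_eq_coe_iff] at hwe
      exact hwe
    have h1 : (g x : EReal) ≤ ((((f w).toReal + φ (w - x)) : ℝ) : EReal) := by
      rw [hg x, EReal.coe_add, EReal.coe_toReal hwt (hfbot w)]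
      exact iInf_le (fun w => f w + ((φ (w - x) : ℝ) : EReal)) w
    rw [EReal.coe_le_coe_iff] at h1
    have h2 : φ (w - x) ≤ φ (w - y) + φ (y - x) := by
      have := hsub (w - y) (y - x)
      simpa using this
    have h3 : φ (y - x) ≤ M * ‖y - x‖ := hMb _
    have h4 : ‖y - x‖ = ‖x - y‖ := norm_sub_rev _ _
    rw [h4] at h3
    linarith [hid]
  ext p
  simp only [Set.mem_inter_iff, Set.mem_setOf_eq]
  constructor
  · -- forward inclusion
    rintro ⟨x, ε, q, hε0, hεto, hxto, hgto, hqf, hqto⟩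
    -- choose minimizers
    choose w hwt hwe using fun k => hmin (x k)
    have hid : ∀ k, g (x k) = (f (w k)).toReal + φ (w k - x k) := by
      intro k
      have := hwe k
      rw [← EReal.coe_toReal (hwt k) (hfbot (w k)), ← EReal.coe_add,
        EReal.coe_eq_coe_iff] at this
      exact this
    have hLB : ∀ k, g x0 - ℓ * ‖w k - x0‖ ≤ (f (w k)).toReal := by
      intro k
      have h1 := hLip (w k) x0 (hwt k) hfx0top
      rw [hfx0real] at h1
      have := neg_abs_le ((f (w k)).toReal - g x0)
      have h2 := abs_le.1 h1
      linarith [h2.1]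
    have hdist : ∀ k, (m - ℓ) * ‖w k - x k‖ ≤ (g (x k) - g x0) + ℓ * ‖x k - x0‖ := by
      intro k
      have h1 := hcoer (w k - x k)
      have h2 := hLB k
      have h3 : ‖w k - x0‖ ≤ ‖w k - x k‖ + ‖x k - x0‖ :=
        norm_sub_le_norm_sub_add_norm_sub _ _ _
      have h4 := hid k
      nlinarith [mul_le_mul_of_nonneg_left h3 hℓ]
    have hxnto : Tendsto (fun k => ‖x k - x0‖) atTop (𝓝 0) := by
      have := tendsto_iff_norm_sub_tendsto_zero.1 hxto
      simpa using this
    have hato : Tendsto (fun k => ((g (x k) - g x0) + ℓ * ‖x k - x0‖) / (m - ℓ))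
        atTop (𝓝 0) := by
      have h1 : Tendsto (fun k => g (x k) - g x0) atTop (𝓝 0) := by
        have : Tendsto (fun k => g (x k) - g x0) atTop (𝓝 (g x0 - g x0)) :=
          hgto.sub tendsto_const_nhds
        simpa using this
      have h2 : Tendsto (fun k => (g (x k) - g x0) + ℓ * ‖x k - x0‖) atTop (𝓝 0) := by
        have := h1.add (hxnto.const_mul ℓ)
        simpa using this
      have := h2.div_const (m - ℓ)
      simpa using this
    have hnto : Tendsto (fun k => ‖w k - x k‖) atTop (𝓝 0) := by
      apply squeeze_zero (fun k => norm_nonneg _) _ hato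
      intro k
      rw [le_div_iff₀ (by linarith)]
      linarith [hdist k]
    have hwto : Tendsto w atTop (𝓝 x0) := by
      rw [tendsto_iff_norm_sub_tendsto_zero]
      apply squeeze_zero (fun k => norm_nonneg _)
        (g := fun k => ‖w k - x k‖ + ‖x k - x0‖)
      · intro k
        exact norm_sub_le_norm_sub_add_norm_sub _ _ _
      · have := hnto.add hxnto
        simpa using this
    have hφto : Tendsto (fun k => φ (w k - x k)) atTop (𝓝 0) := by
      apply squeeze_zero (fun k => hφpos _) (g := fun k => M * ‖w k - x k‖)
      · intro k; exact hMb _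
      · have := hnto.const_mul M
        simpa using this
    have hfwto : Tendsto (fun k => f (w k)) atTop (𝓝 (f x0)) := by
      have h1 : ∀ k, f (w k) = (((g (x k) - φ (w k - x k) : ℝ)) : EReal) := by
        intro k
        rw [← EReal.coe_toReal (hwt k) (hfbot (w k)), EReal.coe_eq_coe_iff]
        linarith [hid k]
      have h2 : Tendsto (fun k => g (x k) - φ (w k - x k)) atTop (𝓝 (g x0)) := by
        have := hgto.sub hφto
        simpa using this
      rw [hfx0]
      simp only [h1]
      rw [EReal.tendsto_coe]
      exact h2
    constructor
    · -- p ∈ limitingSubdiffE f x0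
      refine ⟨w, ε, q, hε0, hεto, hwto, hfwto, ?_, hqto⟩
      intro k η hη
      have He := hqf k η hη
      have ht : Tendsto (fun z : X => z - w k + x k) (𝓝 (w k)) (𝓝 (x k)) := by
        have hc : Continuous (fun z : X => z - w k + x k) :=
          (continuous_id.sub continuous_const).add continuous_const
        have := hc.tendsto (w k)
        simpa using this
      filter_upwards [ht.eventually He] with z hz
      simp only [add_sub_cancel_right] at hz
      by_cases hzt : f z = ⊤
      · rw [hzt, ← EReal.coe_toReal (hwt k) (hfbot (w k))]
        rw [EReal.top_sub_coe, EReal.top_add_of_ne_bot (EReal.coe_ne_bot _)]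
        exact le_top
      · have hgu : g (z - w k + x k) ≤ (f z).toReal + φ (w k - x k) := by
          have h1 : (g (z - w k + x k) : EReal) ≤
              (((f z).toReal + φ (w k - x k) : ℝ) : EReal) := by
            rw [hg _, EReal.coe_add, EReal.coe_toReal hzt (hfbot z)]
            have := iInf_le (fun v => f v + ((φ (v - (z - w k + x k)) : ℝ) : EReal)) z
            have heq : z - (z - w k + x k) = w k - x k := by abel
            rwa [heq] at this
          exact EReal.coe_le_coe_iff.1 h1
        have hreal : q k (z - w k) ≤ (f z).toReal - (f (w k)).toReal
            + (ε k + η) * ‖z - w k‖ := by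
          have h2 := hid k
          linarith [hz, hgu]
        rw [← EReal.coe_toReal hzt (hfbot z), ← EReal.coe_toReal (hwt k) (hfbot (w k)),
          ← EReal.coe_sub, ← EReal.coe_add, EReal.coe_le_coe_iff]
        exact hreal
    · -- -p ∈ limitingSubdiff φ 0
      refine ⟨fun k => w k - x k, ε, fun k => -(q k), hε0, hεto, ?_, ?_, ?_, ?_⟩
      · rw [tendsto_zero_iff_norm_tendsto_zero]
        exact hnto
      · rw [hφ0]
        exact hφto
      · intro k η hη
        have He := hqf k η hη
        have ht : Tendsto (fun ζ : X => w k - ζ) (𝓝 (w k - x k)) (𝓝 (x k)) := by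
          have hc : Continuous (fun ζ : X => w k - ζ) :=
            continuous_const.sub continuous_id
          have := hc.tendsto (w k - x k)
          simpa using this
        filter_upwards [ht.eventually He] with ζ hζ
        have hgu : g (w k - ζ) ≤ (f (w k)).toReal + φ ζ := by
          have h1 : (g (w k - ζ) : EReal) ≤ (((f (w k)).toReal + φ ζ : ℝ) : EReal) := by
            rw [hg _, EReal.coe_add, EReal.coe_toReal (hwt k) (hfbot (w k))]
            have := iInf_le (fun v => f v + ((φ (v - (w k - ζ)) : ℝ) : EReal)) (w k)
            have heq : w k - (w k - ζ) = ζ := by abel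
            rwa [heq] at this
          exact EReal.coe_le_coe_iff.1 h1
        have heq2 : w k - ζ - x k = -(ζ - (w k - x k)) := by abel
        rw [heq2] at hζ
        rw [map_neg, norm_neg] at hζ
        have h3 := hid k
        have h4 : (-(q k)) (ζ - (w k - x k)) = -(q k (ζ - (w k - x k))) := rfl
        rw [h4]
        linarith [hζ, hgu]
      · intro v
        have := (hqto v).neg
        simpa using this
  · -- reverse inclusion
    rintro ⟨⟨x, ε, q, hε0, hεto, hxto, hfto, hqf, hqto⟩, z, δ, r, hδ0, hδto, hzto, hφzto, hrf, hrto⟩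
    -- the linear functional -p is dominated by φ
    have hpφ : ∀ v : X, -(p v) ≤ φ v := by
      intro v
      have hr1 : ∀ j, r j v ≤ φ v + δ j * ‖v‖ := by
        intro j
        by_cases hv : v = 0
        · simp [hv, hφ0]
        · have hvn : (0:ℝ) < ‖v‖ := norm_pos_iff.2 hv
          have hstep : ∀ η : ℝ, 0 < η → r j v ≤ φ v + (δ j + η) * ‖v‖ := by
            intro η hη
            have He := hrf j η hη
            rw [Metric.eventually_nhds_iff] at He
            obtain ⟨ρ, hρ, hball⟩ := He
            set t : ℝ := ρ / (2 * ‖v‖) with htd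
            have htpos : 0 < t := by positivity
            have htn : ‖t • v‖ = t * ‖v‖ := by
              rw [norm_smul, Real.norm_eq_abs, abs_of_pos htpos]
            have hdist : dist (z j + t • v) (z j) < ρ := by
              rw [dist_eq_norm, add_sub_cancel_left, htn, htd]
              rw [div_mul_eq_mul_div, div_lt_iff₀ (by positivity)]
              nlinarith
            have hb := hball hdist
            rw [add_sub_cancel_left] at hb
            have h1 : r j (t • v) = t * r j v := by
              rw [map_smul]; rfl
            have h2 : φ (z j + t • v) ≤ φ (z j) + t * φ v := by
              have := hsub (z j) (t • v)
              rw [hpos t htpos v] at this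
              exact this
            rw [h1, htn] at hb
            have h3 : t * r j v ≤ t * (φ v + (δ j + η) * ‖v‖) := by nlinarith
            exact le_of_mul_le_mul_left (by linarith [h3]) htpos
          by_contra hcon
          push_neg at hcon
          have hη : 0 < (r j v - (φ v + δ j * ‖v‖)) / (2 * ‖v‖) :=
            div_pos (by linarith) (by positivity)
          have := hstep _ hη
          rw [add_mul] at this
          have h5 : (r j v - (φ v + δ j * ‖v‖)) / (2 * ‖v‖) * ‖v‖
              = (r j v - (φ v + δ j * ‖v‖)) / 2 := by
            field_simp
          rw [h5] at this
          linarith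
      have h1 : Tendsto (fun j => r j v) atTop (𝓝 ((-p) v)) := hrto v
      have h2 : Tendsto (fun j => φ v + δ j * ‖v‖) atTop (𝓝 (φ v)) := by
        have := (hδto.mul_const ‖v‖).const_add (φ v)
        simpa using this
      have := le_of_tendsto_of_tendsto' h1 h2 hr1
      simpa using this
    -- norm convergence of q to p
    have hqnorm : Tendsto (fun k => ‖q k - p‖) atTop (𝓝 0) := by
      have h1 := clm_tendsto_of_pointwise q p hqto
      rw [tendsto_iff_norm_sub_tendsto_zero] at h1
      exact h1
    -- eventual finiteness of f along the sequence
    have hev : ∀ᶠ k in atTop, f (x k) < ⊤ := by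
      apply hfto (isOpen_Iio.mem_nhds _)
      rw [hfx0]
      exact EReal.coe_lt_top _
    obtain ⟨k₀, hk₀⟩ := eventually_atTop.1 hev
    set C : ℝ := (M + ℓ) / (m - ℓ) with hC
    have hC0 : 0 ≤ C := div_nonneg (by linarith) (by linarith)
    have h1C : (0:ℝ) < 1 + C := by linarith
    have hshift : Tendsto (fun k : ℕ => k + k₀) atTop atTop := tendsto_add_atTop_nat k₀
    refine ⟨fun k => x (k + k₀),
      fun k => ε (k + k₀) * (1 + C) + C * ‖q (k + k₀) - p‖,
      fun k => q (k + k₀), ?_, ?_, ?_, ?_, ?_, ?_⟩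
    · intro k
      beta_reduce
      have ha1 := mul_nonneg (hε0 (k + k₀)) (le_of_lt h1C)
      have ha2 := mul_nonneg hC0 (norm_nonneg (q (k + k₀) - p))
      linarith
    · have h1 : Tendsto (fun k => ε (k + k₀) * (1 + C)) atTop (𝓝 0) := by
        have := (hεto.comp hshift).mul_const (1 + C)
        simpa using this
      have h2 : Tendsto (fun k => C * ‖q (k + k₀) - p‖) atTop (𝓝 0) := by
        have := (hqnorm.comp hshift).const_mul C
        simpa using this
      have := h1.add h2
      simpa using this
    · exact hxto.comp hshift
    · have h0 : Tendsto (fun k => f (x (k + k₀))) atTop (𝓝 (f x0)) := hfto.comp hshift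
      rw [hfx0] at h0
      rw [← EReal.tendsto_coe]
      apply Tendsto.congr _ h0
      intro k
      exact hgeq _ (ne_of_lt (hk₀ (k + k₀) (Nat.le_add_left k₀ k)))
    · intro k
      beta_reduce
      intro η hη
      have hKt : f (x (k + k₀)) ≠ ⊤ := ne_of_lt (hk₀ (k + k₀) (Nat.le_add_left k₀ k))
      have hgxK : (f (x (k + k₀))).toReal = g (x (k + k₀)) := by
        rw [hgeq _ hKt]; exact EReal.toReal_coe _
      have hη₀ : 0 < η / (1 + C) := by positivity
      have He := hqf (k + k₀) _ hη₀
      rw [Metric.eventually_nhds_iff] at He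
      obtain ⟨ρ, hρ, hball⟩ := He
      rw [Metric.eventually_nhds_iff]
      refine ⟨ρ / (1 + C), div_pos hρ h1C, ?_⟩
      intro u hu
      rw [dist_eq_norm] at hu
      obtain ⟨w, hwt, hwe⟩ := hmin u
      have hid : g u = (f w).toReal + φ (w - u) := by
        rw [← EReal.coe_toReal hwt (hfbot w), ← EReal.coe_add,
          EReal.coe_eq_coe_iff] at hwe
        exact hwe
      have hfw1 : g (x (k + k₀)) - ℓ * ‖w - x (k + k₀)‖ ≤ (f w).toReal := by
        have h1 := hLip w (x (k + k₀)) hwt hKt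
        rw [hgxK] at h1
        linarith [(abs_le.1 h1).1]
      have h2 : g u ≤ g (x (k + k₀)) + M * ‖u - x (k + k₀)‖ := hgLip u (x (k + k₀))
      have h3 := hcoer (w - u)
      have h4 : ‖w - x (k + k₀)‖ ≤ ‖w - u‖ + ‖u - x (k + k₀)‖ :=
        norm_sub_le_norm_sub_add_norm_sub _ _ _
      have h5 : (m - ℓ) * ‖w - u‖ ≤ (M + ℓ) * ‖u - x (k + k₀)‖ := by
        nlinarith [mul_le_mul_of_nonneg_left h4 hℓ]
      have hwu : ‖w - u‖ ≤ C * ‖u - x (k + k₀)‖ := by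
        rw [hC, div_mul_eq_mul_div, le_div_iff₀ (by linarith)]
        linarith [h5]
      have hwxK : ‖w - x (k + k₀)‖ ≤ (1 + C) * ‖u - x (k + k₀)‖ := by linarith
      have hwρ : ‖w - x (k + k₀)‖ < ρ := by
        have : (1 + C) * ‖u - x (k + k₀)‖ < (1 + C) * (ρ / (1 + C)) :=
          mul_lt_mul_of_pos_left hu h1C
        rw [mul_div_cancel₀ _ (ne_of_gt h1C)] at this
        linarith
      have hb := hball (show dist w (x (k + k₀)) < ρ by rwa [dist_eq_norm])
      rw [← EReal.coe_toReal hwt (hfbot w), hgeq _ hKt, ← EReal.coe_sub,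
        ← EReal.coe_add, EReal.coe_le_coe_iff] at hb
      have hsplit : q (k + k₀) (u - x (k + k₀))
          = q (k + k₀) (w - x (k + k₀)) + q (k + k₀) (u - w) := by
        rw [← map_add]
        congr 1
        abel
      have hqp : q (k + k₀) (u - w) ≤ φ (w - u) + ‖q (k + k₀) - p‖ * ‖u - w‖ := by
        have e1 : q (k + k₀) (u - w) = p (u - w) + (q (k + k₀) - p) (u - w) := by
          rw [ContinuousLinearMap.sub_apply]
          ring
        have e2 : p (u - w) = -(p (w - u)) := by
          rw [← map_neg]
          congr 1
          abel
        have e3 := hpφ (w - u)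
        have e4 : (q (k + k₀) - p) (u - w) ≤ ‖q (k + k₀) - p‖ * ‖u - w‖ := by
          have := (q (k + k₀) - p).le_opNorm (u - w)
          rw [Real.norm_eq_abs] at this
          exact le_trans (le_abs_self _) this
        linarith
      have hnuw : ‖u - w‖ = ‖w - u‖ := norm_sub_rev _ _
      have ineq2 : (ε (k + k₀) + η / (1 + C)) * ‖w - x (k + k₀)‖
          ≤ (ε (k + k₀) + η / (1 + C)) * ((1 + C) * ‖u - x (k + k₀)‖) :=
        mul_le_mul_of_nonneg_left hwxK (by have := hε0 (k + k₀); positivity)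
      have ineq3 : ‖q (k + k₀) - p‖ * ‖w - u‖
          ≤ ‖q (k + k₀) - p‖ * (C * ‖u - x (k + k₀)‖) :=
        mul_le_mul_of_nonneg_left hwu (norm_nonneg _)
      have key : (ε (k + k₀) + η / (1 + C)) * ((1 + C) * ‖u - x (k + k₀)‖)
          + ‖q (k + k₀) - p‖ * (C * ‖u - x (k + k₀)‖)
          = (ε (k + k₀) * (1 + C) + C * ‖q (k + k₀) - p‖ + η) * ‖u - x (k + k₀)‖ := by
        field_simp
        ring
      rw [hnuw] at hqp
      linarith [hb, hsplit, hqp, hid, ineq2, ineq3, key]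
    · intro v
      exact (hqto v).comp hshift
end

section
/- Suppose the projection mapping P (where P(x) := {w : f(w)+φ(w−x) = (f⊕φ)(x)}) is inner semicompact at x̄ and φ is continuous at w−x̄ for every w ∈ P(x̄). Then the limiting subdifferential satisfies ∂(f⊕φ)(x̄) ⊂ ⋃_{w̄ ∈ P(x̄)} ( ∂f(w̄) ∩ [−∂φ(w̄−x̄)] ). -/
open Filter Topology Set Bornology

variable {X : Type*} [NormedAddCommGroup X] [NormedSpace ℝ X]

lemma memP_fin {f : X → EReal} {φ : X → ℝ} {g : X → ℝ}
    (hfbot : ∀ x, f x ≠ ⊥) {w x : X}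
    (hw : f w + ((φ (w - x) : ℝ) : EReal) = (g x : EReal)) :
    f w = ((g x - φ (w - x) : ℝ) : EReal) := by
  have ht : f w ≠ ⊤ := by
    intro h
    rw [h] at hw
    simp [EReal.top_add_coe] at hw
  lift f w to ℝ using ⟨ht, hfbot w⟩ with a ha
  rw [← EReal.coe_add, EReal.coe_eq_coe_iff] at hw
  rw [EReal.coe_eq_coe_iff]
  linarith

lemma transfer {f : X → EReal} {φ : X → ℝ} {g : X → ℝ}
    (hfbot : ∀ x, f x ≠ ⊥)
    (hg : ∀ x, (g x : EReal) = infConv f φ x)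
    {x w : X} (hw : f w + ((φ (w - x) : ℝ) : EReal) = (g x : EReal))
    {ε : ℝ} {q : X →L[ℝ] ℝ} (hq : q ∈ frechetSubdiff g ε x) :
    q ∈ frechetSubdiffE f ε w ∧ -q ∈ frechetSubdiff φ ε (w - x) := by
  have glb : ∀ x' w', (g x' : EReal) ≤ f w' + ((φ (w' - x') : ℝ) : EReal) := by
    intro x' w'
    rw [hg x']
    exact iInf_le _ w'
  have hfw : f w = ((g x - φ (w - x) : ℝ) : EReal) := memP_fin hfbot hw
  constructor
  · intro η hη
    have H := hq η hη
    have hmap : Tendsto (fun u : X => x + (u - w)) (𝓝 w) (𝓝 x) := by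
      have : Continuous (fun u : X => x + (u - w)) := by continuity
      have h2 := this.tendsto w
      simpa using h2
    filter_upwards [hmap.eventually H] with u hu
    have harg : (x + (u - w)) - x = u - w := by abel
    rw [harg] at hu
    by_cases hfu : f u = ⊤
    · rw [hfu, hfw, EReal.top_sub_coe, EReal.top_add_coe]
      exact le_top
    · lift f u to ℝ using ⟨hfu, hfbot u⟩ with b hb
      have hglb := glb (x + (u - w)) u
      have harg2 : u - (x + (u - w)) = w - x := by abel
      rw [harg2, ← hb, ← EReal.coe_add, EReal.coe_le_coe_iff] at hglb
      rw [hfw, ← EReal.coe_sub, ← EReal.coe_add, EReal.coe_le_coe_iff]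
      linarith
  · intro η hη
    have H := hq η hη
    have hmap : Tendsto (fun y : X => w - y) (𝓝 (w - x)) (𝓝 x) := by
      have : Continuous (fun y : X => w - y) := by continuity
      have h2 := this.tendsto (w - x)
      simpa using h2
    filter_upwards [hmap.eventually H] with y hy
    have harg : (w - y) - x = -(y - (w - x)) := by abel
    rw [harg] at hy
    have hglb := glb (w - y) w
    have harg2 : w - (w - y) = y := by abel
    rw [harg2, hfw, ← EReal.coe_add, EReal.coe_le_coe_iff] at hglb
    have hgx : g x = (g x - φ (w - x)) + φ (w - x) := by ring
    have hqneg : q (-(y - (w - x))) = -(q (y - (w - x))) := by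
      rw [map_neg]
    rw [hqneg] at hy
    have hnorm : ‖-(y - (w - x))‖ = ‖y - (w - x)‖ := norm_neg _
    rw [hnorm] at hy
    simp only [ContinuousLinearMap.neg_apply]
    linarith

/-- limiting subdifferential estimate under inner semicompactness. -/
theorem stmt_14 [CompleteSpace X] (f : X → EReal) (φ : X → ℝ) (g : X → ℝ)
    (hfbot : ∀ x, f x ≠ ⊥) (hφpos : ∀ x, 0 ≤ φ x)
    (hg : ∀ x, (g x : EReal) = infConv f φ x) (x0 : X)
    (P : X → Set X)
    (hP : ∀ x : X, P x = {w : X | f w + ((φ (w - x) : ℝ) : EReal) = (g x : EReal)})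
    (hPne : (P x0).Nonempty)
    (hisc : ∀ x : ℕ → X, Tendsto x atTop (𝓝 x0) →
      ∃ w : ℕ → X, (∀ k, w k ∈ P (x k)) ∧
        ∃ (σ : ℕ → ℕ) (w0 : X), StrictMono σ ∧ w0 ∈ P x0 ∧
          Tendsto (w ∘ σ) atTop (𝓝 w0))
    (hφc : ∀ w ∈ P x0, ContinuousAt φ (w - x0)) :
    ∀ p ∈ limitingSubdiff g x0, ∃ w0 ∈ P x0,
      p ∈ limitingSubdiffE f w0 ∧ -p ∈ limitingSubdiff φ (w0 - x0) := by
  intro p hp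
  obtain ⟨x, ε, q, hε0, hεlim, hxlim, hglim, hqf, hqlim⟩ := hp
  obtain ⟨w, hwP, σ, w0, hσ, hw0P, hwlim⟩ := hisc x hxlim
  have hwP' : ∀ k, f (w k) + ((φ (w k - x k) : ℝ) : EReal) = (g (x k) : EReal) := by
    intro k
    have := hwP k
    rw [hP] at this
    exact this
  have hw0P' : f w0 + ((φ (w0 - x0) : ℝ) : EReal) = (g x0 : EReal) := by
    have := hw0P
    rw [hP] at this
    exact this
  have hfw0 : f w0 = ((g x0 - φ (w0 - x0) : ℝ) : EReal) := memP_fin hfbot hw0P'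
  have hσt : Tendsto σ atTop atTop := hσ.tendsto_atTop
  have hyl : Tendsto (fun k => w (σ k) - x (σ k)) atTop (𝓝 (w0 - x0)) :=
    hwlim.sub (hxlim.comp hσt)
  have hφlim : Tendsto (fun k => φ (w (σ k) - x (σ k))) atTop (𝓝 (φ (w0 - x0))) :=
    ((hφc w0 hw0P).tendsto).comp hyl
  refine ⟨w0, hw0P, ?_, ?_⟩
  · refine ⟨fun k => w (σ k), fun k => ε (σ k), fun k => q (σ k),
      fun k => hε0 _, hεlim.comp hσt, hwlim, ?_, ?_, ?_⟩
    · have hreal : Tendsto (fun k => g (x (σ k)) - φ (w (σ k) - x (σ k))) atTop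
        (𝓝 (g x0 - φ (w0 - x0))) := (hglim.comp hσt).sub hφlim
      have := EReal.tendsto_coe.mpr hreal
      rw [hfw0]
      refine this.congr fun k => ?_
      exact (memP_fin hfbot (hwP' (σ k))).symm
    · intro k
      exact (transfer hfbot hg (hwP' (σ k)) (hqf (σ k))).1
    · intro v
      exact (hqlim v).comp hσt
  · refine ⟨fun k => w (σ k) - x (σ k), fun k => ε (σ k), fun k => -(q (σ k)),
      fun k => hε0 _, hεlim.comp hσt, hyl, hφlim, ?_, ?_⟩
    · intro k
      exact (transfer hfbot hg (hwP' (σ k)) (hqf (σ k))).2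
    · intro v
      simpa using ((hqlim v).comp hσt).neg
end
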